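/- arXiv:2501.05315 — 6 statements merged into one kernel-verified Lean document; each statement's English description precedes it below -/
import Mathlib

section
/- Let p_1, …, p_n be distinct points in ℝ³ with p_i = (p_{i1}, p_{i2}, p_{i3}) and ζ_1, …, ζ_n ∈ ℝ. Define the polynomial map 𝒫 : ℝ³ × ℝⁿ → ℝ³ × ℝⁿ with components ℛ_j(x,u) = Σ_{i=1}^n ζ_i (x_j − p_{ij}) ∏_{ℓ≠i} u_ℓ³ for j = 1,2,3 and 𝒬_m(x,u) = u_m² − ‖x − p_m‖² for m = 1, …, n. Then a point x ∈ ℝ³ ∖ {p_1, …, p_n} is a critical point of V(x) = Σ_{i=1}^n ζ_i/‖x − p_i‖ if and only if 𝒫(x, r(x)) = 0, where r(x) = (‖x − p_1‖, …, ‖x − p_n‖). -/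
noncomputable section

open Finset

abbrev E3 := EuclideanSpace ℝ (Fin 3)

/-- The electrostatic potential of `n` point charges of magnitudes `ζ i` at points `p i`. -/
def pot {n : ℕ} (p : Fin n → E3) (ζ : Fin n → ℝ) : E3 → ℝ :=
  fun x => ∑ i, ζ i / ‖x - p i‖

/-- The polynomial `ℛ_j(x,u) = ∑ i, ζ i (x_j - p_{ij}) ∏_{ℓ ≠ i} u_ℓ³`. -/
def Rpoly {n : ℕ} (p : Fin n → E3) (ζ : Fin n → ℝ) (j : Fin 3) (x : E3)
    (u : Fin n → ℝ) : ℝ :=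
  ∑ i, ζ i * (x j - p i j) * ∏ ℓ ∈ Finset.univ.erase i, u ℓ ^ 3

/-- The polynomial `𝒬_m(x,u) = u_m² - ‖x - p_m‖²`. -/
def Qpoly {n : ℕ} (p : Fin n → E3) (m : Fin n) (x : E3) (u : Fin n → ℝ) : ℝ :=
  u m ^ 2 - ‖x - p m‖ ^ 2

/-- The polynomial map `𝒫 : ℝ³ × ℝⁿ → ℝ³ × ℝⁿ` with components `ℛ_j` and `𝒬_m`. -/
def Ppoly {n : ℕ} (p : Fin n → E3) (ζ : Fin n → ℝ) :
    E3 × (Fin n → ℝ) → (Fin 3 → ℝ) × (Fin n → ℝ) :=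
  fun z => (fun j => Rpoly p ζ j z.1 z.2, fun m => Qpoly p m z.1 z.2)

lemma hasFDerivAt_inv_norm {y : E3} (hy : y ≠ 0) :
    HasFDerivAt (fun z : E3 => ‖z‖⁻¹) ((-(‖y‖ ^ 3)⁻¹) • (innerSL ℝ y)) y := by
  have hn : ‖y‖ ≠ 0 := norm_ne_zero_iff.mpr hy
  have hsq : (‖y‖ : ℝ) ^ 2 ≠ 0 := pow_ne_zero _ hn
  have h := ((hasStrictFDerivAt_norm_sq y).hasFDerivAt).rpow_const
      (p := -(1/2)) (Or.inl hsq)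
  have hfun : (fun z : E3 => ‖z‖⁻¹) = fun z : E3 => (‖z‖ ^ 2 : ℝ) ^ (-(1/2) : ℝ) := by
    funext z
    rw [← Real.rpow_natCast ‖z‖ 2, ← Real.rpow_mul (norm_nonneg z)]
    norm_num [Real.rpow_neg_one]
  rw [hfun]
  convert h using 1
  ext v
  have h32 : ((‖y‖ : ℝ) ^ 2) ^ (-(1/2) - 1 : ℝ) = (‖y‖ ^ 3)⁻¹ := by
    rw [← Real.rpow_natCast ‖y‖ 2, ← Real.rpow_mul (norm_nonneg y)]
    rw [show ((2 : ℕ) : ℝ) * (-(1/2) - 1) = -(3 : ℕ) by push_cast; ring]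
    rw [Real.rpow_neg (norm_nonneg y), Real.rpow_natCast]
  simp only [ContinuousLinearMap.smul_apply, smul_eq_mul, h32,
    ContinuousLinearMap.coe_smul', Pi.smul_apply]
  ring
  ext v
  have h32 : ((‖y‖ : ℝ) ^ 2) ^ (-(1/2) - 1 : ℝ) = (‖y‖ ^ 3)⁻¹ := by
    rw [← Real.rpow_natCast ‖y‖ 2, ← Real.rpow_mul (norm_nonneg y)]
    rw [show ((2 : ℕ) : ℝ) * (-(1/2) - 1) = -(3 : ℕ) by push_cast; ring]
    rw [Real.rpow_neg (norm_nonneg y), Real.rpow_natCast]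
  have h32' : ((‖y‖ : ℝ) ^ 2) ^ (-3 / 2 : ℝ) = (‖y‖ ^ 3)⁻¹ := by rw [← h32]; norm_num
  rw [h32']
  simp only [ContinuousLinearMap.smul_apply, smul_eq_mul, nsmul_eq_mul]
  ring

/-- a point `x` of the domain is a critical point of `V` iff
`𝒫(x, r(x)) = 0` where `r(x) = (‖x - p 1‖, …, ‖x - p n‖)`. -/
theorem stmt2 (n : ℕ) (p : Fin n → E3) (hp : Function.Injective p) (ζ : Fin n → ℝ)
    (x : E3) (hx : ∀ i, x ≠ p i) :
    fderiv ℝ (pot p ζ) x = 0 ↔ Ppoly p ζ (x, fun i => ‖x - p i‖) = 0 := by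
  have hxp : ∀ i, x - p i ≠ 0 := fun i => sub_ne_zero.mpr (hx i)
  have hr : ∀ i, (0 : ℝ) < ‖x - p i‖ := fun i => norm_pos_iff.mpr (hxp i)
  set c : Fin n → ℝ := fun i => ζ i * (-(‖x - p i‖ ^ 3)⁻¹) with hc
  -- the derivative of the potential
  have hD : HasFDerivAt (pot p ζ) (∑ i, c i • (innerSL ℝ (x - p i))) x := by
    have : ∀ i ∈ Finset.univ,
        HasFDerivAt (fun y : E3 => ζ i / ‖y - p i‖) (c i • (innerSL ℝ (x - p i))) x := by
      intro i _
      have hbase := hasFDerivAt_inv_norm (hxp i)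
      have hsub : HasFDerivAt (fun y : E3 => y - p i)
          (ContinuousLinearMap.id ℝ E3) x := (hasFDerivAt_id x).sub_const (p i)
      have hcomp := hbase.comp x hsub
      rw [ContinuousLinearMap.comp_id] at hcomp
      have := hcomp.const_mul (ζ i)
      rw [smul_smul] at this
      simp only [div_eq_mul_inv]
      exact this
    exact HasFDerivAt.fun_sum this
  rw [hD.fderiv]
  -- the per-coordinate sums
  set S : Fin 3 → ℝ := fun j => ∑ i, c i * (x j - p i j) with hS
  have happly : ∀ v : E3, (∑ i, c i • (innerSL ℝ (x - p i))) v = ∑ j, v j * S j := by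
    intro v
    simp only [ContinuousLinearMap.sum_apply, ContinuousLinearMap.smul_apply, innerSL_apply_apply,
      smul_eq_mul, PiLp.inner_apply, PiLp.sub_apply, RCLike.inner_apply, conj_trivial,
      Finset.mul_sum, hS]
    rw [Finset.sum_comm]
    exact Finset.sum_congr rfl fun j _ => Finset.sum_congr rfl fun i _ => by ring
  -- left side iff all S j = 0
  have hleft : (∑ i, c i • (innerSL ℝ (x - p i))) = 0 ↔ ∀ j, S j = 0 := by
    constructor
    · intro h j
      have := congrArg (fun L : E3 →L[ℝ] ℝ => L (EuclideanSpace.single j 1)) h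
      simp only [happly, ContinuousLinearMap.zero_apply] at this
      rw [Finset.sum_eq_single j] at this
      · simpa using this
      · intro b _ hb; simp [EuclideanSpace.single_apply, hb]
      · simp
    · intro h
      ext v
      rw [ContinuousLinearMap.zero_apply, happly]
      simp [h]
  -- relate Rpoly to S
  have hRS : ∀ j : Fin 3, Rpoly p ζ j x (fun i => ‖x - p i‖) =
      -(∏ ℓ, ‖x - p ℓ‖ ^ 3) * S j := by
    intro j
    rw [Rpoly, hS, Finset.mul_sum]
    refine Finset.sum_congr rfl fun i _ => ?_
    have hprod : (∏ ℓ, ‖x - p ℓ‖ ^ 3) = ‖x - p i‖ ^ 3 * ∏ ℓ ∈ Finset.univ.erase i, ‖x - p ℓ‖ ^ 3 :=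
      (Finset.mul_prod_erase Finset.univ _ (Finset.mem_univ i)).symm
    have hne : (‖x - p i‖ : ℝ) ^ 3 ≠ 0 := pow_ne_zero _ (hr i).ne'
    rw [hc]
    field_simp [hprod]
    rw [hprod]
    field_simp
    rw [mul_div_cancel_right₀ _ (hr i).ne']
  have hC : (∏ ℓ, ‖x - p ℓ‖ ^ 3) ≠ 0 :=
    Finset.prod_ne_zero_iff.mpr fun i _ => pow_ne_zero _ (hr i).ne'
  constructor
  · intro h
    rw [hleft] at h
    rw [Ppoly, Prod.ext_iff]
    constructor
    · funext j; simp [hRS j, h j]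
    · funext m; simp [Qpoly]
  · intro h
    rw [Ppoly, Prod.ext_iff] at h
    rw [hleft]
    intro j
    have := congrFun h.1 j
    simp only [Pi.zero_apply] at this
    rw [hRS j] at this
    rcases mul_eq_zero.mp this with h' | h'
    · exact absurd (neg_eq_zero.mp h') hC
    · exact h'
end
end

section
/- Fix distinct points p_2, …, p_n ∈ ℝ³, charges ζ_1, …, ζ_n ∈ ℝ with ζ_1 ≠ 0, and a point x ∈ ℝ³ with x ≠ p_i for all i ≥ 2. Define F : ℝ³ → ℝ by F(p_1) = Σ_{i=1}^n ζ_i ∏_{ℓ≠i} ‖x − p_ℓ‖³ (as a function of the position p_1 of the first charge). Then at every p_1 ∈ ℝ³ with p_1 ≠ x and F(p_1) = 0, the gradient of F does not vanish; that is, F is a submersion at every point of its zero set away from x. -/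
noncomputable section

open Finset

/-- the genericity function `F(p₁) = ∑ i, ζ i ∏_{ℓ ≠ i} ‖x - p ℓ‖³`,
viewed as a function of the position `p₁` of the first charge, is a submersion at
every point of its zero set away from `x`. -/
theorem stmt4 (n : ℕ) (hn : 0 < n) (p : Fin n → E3) (ζ : Fin n → ℝ)
    (hζ : ζ ⟨0, hn⟩ ≠ 0)
    (hdist : ∀ i j : Fin n, i ≠ ⟨0, hn⟩ → j ≠ ⟨0, hn⟩ → p i = p j → i = j)
    (x : E3) (hx : ∀ i : Fin n, i ≠ ⟨0, hn⟩ → x ≠ p i)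
    (F : E3 → ℝ)
    (hF : F = fun y => ∑ i, ζ i * ∏ ℓ ∈ Finset.univ.erase i,
      ‖x - Function.update p ⟨0, hn⟩ y ℓ‖ ^ 3) :
    ∀ y : E3, y ≠ x → F y = 0 → fderiv ℝ F y ≠ 0 := by
  set z : Fin n := ⟨0, hn⟩ with hz
  set A : ℝ := ζ z * ∏ ℓ ∈ Finset.univ.erase z, ‖x - p ℓ‖ ^ 3 with hA
  set B : ℝ := ∑ i ∈ Finset.univ.erase z, ζ i * ∏ ℓ ∈ (Finset.univ.erase i).erase z,
      ‖x - p ℓ‖ ^ 3 with hB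
  have key : ∀ y : E3, F y = A + ‖x - y‖ ^ 3 * B := by
    intro y
    rw [hF]
    simp only
    rw [← Finset.add_sum_erase _ _ (Finset.mem_univ z)]
    congr 1
    · rw [hA]
      congr 1
      refine Finset.prod_congr rfl fun ℓ hℓ => ?_
      rw [Function.update_of_ne (Finset.ne_of_mem_erase hℓ)]
    · rw [hB, Finset.mul_sum]
      refine Finset.sum_congr rfl fun i hi => ?_
      have hiz : z ∈ Finset.univ.erase i := by
        simp [Finset.mem_erase, (Finset.ne_of_mem_erase hi).symm]
      rw [← Finset.mul_prod_erase _ _ hiz, Function.update_self]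
      have : ∀ ℓ ∈ (Finset.univ.erase i).erase z,
          Function.update p z y ℓ = p ℓ := fun ℓ hℓ =>
        Function.update_of_ne (Finset.ne_of_mem_erase hℓ) _ _
      rw [Finset.prod_congr rfl fun ℓ hℓ => by rw [this ℓ hℓ]]
      ring
  intro y hyx hFy hgrad
  have hxy : x - y ≠ 0 := sub_ne_zero.mpr (fun h => hyx h.symm)
  have hA0 : A ≠ 0 := by
    refine mul_ne_zero hζ (Finset.prod_ne_zero_iff.mpr fun ℓ hℓ => ?_)
    exact pow_ne_zero _ (norm_ne_zero_iff.mpr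
      (sub_ne_zero.mpr (hx ℓ (Finset.ne_of_mem_erase hℓ))))
  have hFyB : ‖x - y‖ ^ 3 * B = -A := by
    have := key y; rw [hFy] at this; linarith
  have hB0 : B ≠ 0 := by
    intro h; rw [h, mul_zero] at hFyB; exact hA0 (by linarith)
  -- F is differentiable at y
  have hFeq : F = fun w => A + ‖x - w‖ ^ 3 * B := funext key
  have hdiff : DifferentiableAt ℝ F y := by
    rw [hFeq]
    have h1 : DifferentiableAt ℝ (fun w : E3 => ‖x - w‖) y :=
      ((differentiableAt_const x).sub differentiableAt_fun_id).norm ℝ hxy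
    exact (differentiableAt_const A).add (((h1.pow 3)).mul (differentiableAt_const B))
  -- line through y in direction x - y
  set g : ℝ → E3 := fun t => y + t • (x - y) with hg
  have hg0 : g 0 = y := by simp [hg]
  have hgd : HasDerivAt g (x - y) 0 := by
    have : HasDerivAt (fun t : ℝ => y + t • (x - y)) ((1 : ℝ) • (x - y)) 0 := by
      simpa using ((hasDerivAt_id (0:ℝ)).smul_const (x - y)).const_add y
    rw [one_smul] at this; exact this
  have hcomp : HasDerivAt (F ∘ g) (fderiv ℝ F y (x - y)) 0 := by
    rw [← hg0] at hdiff
    simpa [hg0] using (hdiff.hasFDerivAt).comp_hasDerivAt 0 hgd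
  -- explicit formula for F ∘ g near 0
  have heq : (F ∘ g) =ᶠ[nhds (0:ℝ)] fun t => A + ((1 - t) ^ 3 * ‖x - y‖ ^ 3) * B := by
    filter_upwards [Metric.ball_mem_nhds (0:ℝ) one_pos] with t ht
    have ht1 : |t| < 1 := by simpa [Real.dist_eq] using ht
    have h1t : (0:ℝ) ≤ 1 - t := by
      have := abs_lt.mp ht1; linarith
    have : x - g t = (1 - t) • (x - y) := by
      simp only [hg]; module
    simp only [Function.comp_apply, key (g t), this, norm_smul, Real.norm_eq_abs,
      abs_of_nonneg h1t, mul_pow]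
  have hφ : HasDerivAt (fun t : ℝ => A + ((1 - t) ^ 3 * ‖x - y‖ ^ 3) * B)
      (-3 * ‖x - y‖ ^ 3 * B) 0 := by
    have h1 : HasDerivAt (fun t : ℝ => 1 - t) (-1) 0 := by
      simpa using ((hasDerivAt_id (0:ℝ)).const_sub 1)
    have h2 : HasDerivAt (fun t : ℝ => (1 - t) ^ 3) (3 * (1 - 0) ^ 2 * (-1)) 0 := by
      simpa using h1.fun_pow 3
    have h3 := ((h2.mul_const (‖x - y‖ ^ 3)).mul_const B).const_add A
    refine h3.congr_deriv ?_
    ring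
  have hval : fderiv ℝ F y (x - y) = -3 * ‖x - y‖ ^ 3 * B :=
    hcomp.unique (hφ.congr_of_eventuallyEq heq)
  rw [hgrad] at hval
  simp only [ContinuousLinearMap.zero_apply] at hval
  have : ‖x - y‖ ^ 3 ≠ 0 := pow_ne_zero _ (norm_ne_zero_iff.mpr hxy)
  have := mul_ne_zero (mul_ne_zero (by norm_num : (-3:ℝ) ≠ 0) this) hB0
  exact this hval.symm
end
end

section
/- Let N ≥ 3, β ∈ ℝ, R > 0, h > 0, and let V be the electrostatic potential of the 2N unit point charges at the vertices of the β-rotated prism, V(x_1,x_2,x_3) = V_0(x_1, x_2, x_3 + h/2) + V_0(x_1 cos β + x_2 sin β, −x_1 sin β + x_2 cos β, x_3 − h/2). Then the origin is a critical point of V; it is non-degenerate if and only if h ≠ √2·R; if h < √2·R the Hessian of V at the origin has exactly one negative eigenvalue (the origin is a 1-saddle), and if h > √2·R it has exactly two negative eigenvalues (the origin is a 2-saddle). -/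
noncomputable section

open Finset Real

/-- The point `(a, b, c)` of `ℝ³`. -/
def pt (a b c : ℝ) : E3 := (WithLp.equiv 2 (Fin 3 → ℝ)).symm ![a, b, c]

/-- The vertices of a regular `N`-gon of circumradius `R` centered at the origin in
the plane `x₃ = 0`. -/
def vert (N : ℕ) (R : ℝ) (k : Fin N) : E3 :=
  pt (R * Real.cos (2 * Real.pi * (k : ℕ) / N)) (R * Real.sin (2 * Real.pi * (k : ℕ) / N)) 0

/-- The electrostatic potential of unit point charges at the vertices of the `N`-gon. -/
def V0 (N : ℕ) (R : ℝ) : E3 → ℝ :=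
  fun x => ∑ k : Fin N, 1 / ‖x - vert N R k‖

/-- The electrostatic potential of the `2N` unit point charges at the vertices of the
`β`-rotated prism of radius `R` and height `h`. -/
def Vprism (N : ℕ) (R h β : ℝ) : E3 → ℝ :=
  fun x => V0 N R (pt (x 0) (x 1) (x 2 + h / 2)) +
    V0 N R (pt (x 0 * Real.cos β + x 1 * Real.sin β)
      (-(x 0) * Real.sin β + x 1 * Real.cos β) (x 2 - h / 2))

/-- The Hessian of `f` at `x`, as a continuous bilinear form. -/
def hess (f : E3 → ℝ) (x : E3) : E3 →L[ℝ] E3 →L[ℝ] ℝ :=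
  fderiv ℝ (fderiv ℝ f) x

/-- Non-degeneracy of the Hessian of `f` at `x`. -/
def Nondeg (f : E3 → ℝ) (x : E3) : Prop :=
  ∀ v : E3, v ≠ 0 → hess f x v ≠ 0

/-- The Morse index of `f` at `x`: the maximal dimension of a subspace on which the
Hessian of `f` at `x` is negative definite (the number of negative eigenvalues). -/
def morseIndex (f : E3 → ℝ) (x : E3) : ℕ :=
  sSup {k : ℕ | ∃ W : Submodule ℝ E3, Module.finrank ℝ ↥W = k ∧
    ∀ v ∈ W, v ≠ 0 → hess f x v v < 0}

namespace S10

lemma pt_apply (a b c : ℝ) (i : Fin 3) : pt a b c i = ![a,b,c] i := rfl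

@[simp] lemma pt0 (a b c : ℝ) : pt a b c 0 = a := rfl
@[simp] lemma pt1 (a b c : ℝ) : pt a b c 1 = b := rfl
@[simp] lemma pt2 (a b c : ℝ) : pt a b c 2 = c := rfl

example (x y : E3) (i : Fin 3) : (x - y) i = x i - y i := by simp
example (x : E3) (i : Fin 3) : (0 : E3) i = 0 := by simp
example (c : ℝ) (x : E3) (i : Fin 3) : (c • x) i = c * x i := by simp

-- coordinate functional
def cf (i : Fin 3) : E3 →L[ℝ] ℝ := EuclideanSpace.proj i

@[simp] lemma cf_apply (i : Fin 3) (x : E3) : cf i x = x i := rfl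

def dual (v : E3) : E3 →L[ℝ] ℝ := ∑ i, v i • cf i

lemma dual_apply (v w : E3) : dual v w = ∑ i, v i * w i := by
  simp [dual, ContinuousLinearMap.sum_apply]

def dualL : E3 →L[ℝ] E3 →L[ℝ] ℝ := ∑ i, (cf i).smulRight (cf i)

lemma dualL_apply (v : E3) : dualL v = dual v := by
  ext w
  simp [dualL, dual, ContinuousLinearMap.sum_apply, mul_comm]

def q (p y : E3) : ℝ := ∑ i, (y i - p i)^2

lemma q_eq_norm (p y : E3) : q p y = ‖y - p‖^2 := by
  rw [EuclideanSpace.norm_eq, Real.sq_sqrt (by positivity)]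
  simp [q]

lemma q_pos (p y : E3) (h : y ≠ p) : 0 < q p y := by
  rw [q_eq_norm]
  exact pow_pos (norm_pos_iff.mpr (sub_ne_zero.mpr h)) 2

lemma inv_norm_eq (p y : E3) : ‖y - p‖⁻¹ = (q p y) ^ (-(1/2) : ℝ) := by
  rw [Real.rpow_neg (by rw [q_eq_norm]; positivity), q_eq_norm]
  rw [← Real.rpow_natCast (‖y - p‖) 2, ← Real.rpow_mul (norm_nonneg _)]
  norm_num

end S10

namespace S10

lemma hasFDerivAt_q (p x : E3) : HasFDerivAt (q p) ((2:ℝ) • dual (x - p)) x := by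
  have h : HasFDerivAt (q p) (∑ i, (2 * (x i - p i)) • cf i) x := by
    apply HasFDerivAt.fun_sum
    intro i _
    have h1 : HasFDerivAt (fun y : E3 => y i - p i) (cf i) x :=
      ((cf i).hasFDerivAt).sub_const (p i)
    have h2 := h1.mul h1
    have : HasFDerivAt (fun y : E3 => (y i - p i) * (y i - p i))
        ((2 * (x i - p i)) • cf i) x := by
      refine h2.congr_fderiv ?_
      symm
      ext w
      simp
      ring
    simpa [pow_two] using this
  convert h using 1
  rw [dual, Finset.smul_sum]
  ext w
  simp [ContinuousLinearMap.sum_apply]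
  exact Finset.sum_congr rfl fun i _ => by ring

def sc (p : E3) (y : E3) : ℝ := -((q p y) ^ (-(3/2) : ℝ))

/-- first derivative of `y ↦ ‖y - p‖⁻¹` -/
lemma L1 (p x : E3) (hx : x ≠ p) :
    HasFDerivAt (fun y => ‖y - p‖⁻¹) (sc p x • dual (x - p)) x := by
  have hq : 0 < q p x := q_pos p x hx
  have hd : HasDerivAt (fun t : ℝ => t ^ (-(1/2) : ℝ))
      ((-(1/2)) * (q p x) ^ ((-(1/2) : ℝ) - 1)) (q p x) :=
    Real.hasDerivAt_rpow_const (Or.inl (ne_of_gt hq))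
  have h := hd.comp_hasFDerivAt x (hasFDerivAt_q p x)
  have hfun : (fun y => ‖y - p‖⁻¹) = (fun t : ℝ => t ^ (-(1/2) : ℝ)) ∘ (q p) := by
    funext y; exact inv_norm_eq p y
  rw [hfun]
  refine h.congr_fderiv ?_
  symm
  rw [smul_smul, sc]
  congr 1
  have : ((-(1/2) : ℝ) - 1) = (-(3/2) : ℝ) := by norm_num
  rw [this]
  ring

/-- the (E3 →L ℝ)-valued map that is the first derivative -/
def G (p : E3) (y : E3) : E3 →L[ℝ] ℝ := sc p y • dual (y - p)

def HH (p x : E3) : E3 →L[ℝ] E3 →L[ℝ] ℝ :=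
  sc p x • dualL + ((3 * (q p x) ^ (-(5/2) : ℝ)) • dual (x - p)).smulRight (dual (x - p))

lemma L2 (p x : E3) (hx : x ≠ p) : HasFDerivAt (G p) (HH p x) x := by
  unfold G
  have hq : 0 < q p x := q_pos p x hx
  -- derivative of sc p
  have hd : HasDerivAt (fun t : ℝ => -(t ^ (-(3/2) : ℝ)))
      (-((-(3/2)) * (q p x) ^ ((-(3/2) : ℝ) - 1))) (q p x) :=
    (Real.hasDerivAt_rpow_const (Or.inl (ne_of_gt hq))).neg
  have hsc : HasFDerivAt (sc p)
      ((-((-(3/2)) * (q p x) ^ ((-(3/2) : ℝ) - 1))) • ((2:ℝ) • dual (x - p))) x := by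
    have h := hd.comp_hasFDerivAt x (hasFDerivAt_q p x)
    exact h
  -- the affine part
  have hA : HasFDerivAt (fun y : E3 => dual (y - p)) dualL x := by
    have : (fun y : E3 => dual (y - p)) = fun y : E3 => dualL y - dual p := by
      funext y
      rw [dualL_apply]
      ext w
      simp [dual_apply, sub_mul, Finset.sum_sub_distrib]
    rw [this]
    exact (dualL.hasFDerivAt).sub_const (dual p)
  have h := hsc.smul hA
  refine h.congr_fderiv ?_
  symm
  rw [HH]
  congr 1
  rw [smul_smul]
  congr 2
  rw [show ((-(3/2) : ℝ) - 1) = (-(5/2) : ℝ) by norm_num]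
  ring

end S10

namespace S10

lemma exp_sum_zero (N m : ℕ) (hm : 0 < m) (hmN : m < N) :
    ∑ k ∈ Finset.range N, Complex.exp ((2 * π * m * k / N : ℝ) * Complex.I) = 0 := by
  have hN : 0 < N := lt_trans hm hmN
  have hNR : (0:ℝ) < N := by exact_mod_cast hN
  set z : ℂ := Complex.exp ((2 * π * m / N : ℝ) * Complex.I) with hz
  have hzk : ∀ k : ℕ, Complex.exp ((2 * π * m * k / N : ℝ) * Complex.I) = z ^ k := by
    intro k
    rw [hz, ← Complex.exp_nat_mul]
    congr 1
    push_cast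
    ring
  have hz1 : z ≠ 1 := by
    rw [hz, Ne, Complex.exp_eq_one_iff]
    rintro ⟨n, hn⟩
    have him := congrArg Complex.im hn
    simp [Complex.ofReal_mul, Complex.mul_im, Complex.mul_re] at him
    -- him should say 2*π*m/N = n * (2*π)
    have hmn : (m : ℝ) = n * N := by
      field_simp [Real.pi_ne_zero] at him
      nlinarith [him, Real.pi_pos]
    rcases le_or_gt n 0 with h | h
    · have : (n:ℝ) * N ≤ 0 := mul_nonpos_of_nonpos_of_nonneg (by exact_mod_cast h) (le_of_lt hNR)
      have hm' : (0:ℝ) < m := by exact_mod_cast hm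
      linarith [hmn ▸ hm']
    · have h1 : (1:ℝ) ≤ (n:ℝ) := by exact_mod_cast h
      have : (N:ℝ) ≤ m := by nlinarith
      have hmN' : (m:ℝ) < N := by exact_mod_cast hmN
      linarith
  have hzN : z ^ N = 1 := by
    rw [hz, ← Complex.exp_nat_mul]
    have hNC : (N:ℂ) ≠ 0 := by exact_mod_cast hN.ne'
    have : (N : ℂ) * (((2 * π * m / N : ℝ)) * Complex.I) = (m : ℂ) * (2 * π * Complex.I) := by
      push_cast
      field_simp
    rw [this, Complex.exp_nat_mul, Complex.exp_two_pi_mul_I, one_pow]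
  calc ∑ k ∈ Finset.range N, Complex.exp ((2 * π * m * k / N : ℝ) * Complex.I)
      = ∑ k ∈ Finset.range N, z ^ k := Finset.sum_congr rfl fun k _ => hzk k
    _ = (z ^ N - 1) / (z - 1) := geom_sum_eq hz1 N
    _ = 0 := by rw [hzN]; simp

end S10

namespace S10

lemma cos_sin_sum (N m : ℕ) (hm : 0 < m) (hmN : m < N) (φ : ℝ) :
    (∑ k ∈ Finset.range N, Real.cos (2 * π * m * k / N + φ) = 0) ∧
    (∑ k ∈ Finset.range N, Real.sin (2 * π * m * k / N + φ) = 0) := by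
  have h : ∑ k ∈ Finset.range N, Complex.exp ((2 * π * m * k / N + φ : ℝ) * Complex.I) = 0 := by
    have : ∀ k ∈ Finset.range N, Complex.exp ((2 * π * m * k / N + φ : ℝ) * Complex.I)
        = Complex.exp ((φ:ℝ) * Complex.I) * Complex.exp ((2 * π * m * k / N : ℝ) * Complex.I) := by
      intro k _
      rw [← Complex.exp_add]
      congr 1
      push_cast
      ring
    rw [Finset.sum_congr rfl this, ← Finset.mul_sum, exp_sum_zero N m hm hmN, mul_zero]
  constructor
  · have := congrArg Complex.re h
    rw [Complex.re_sum] at this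
    simp only [Complex.exp_ofReal_mul_I_re] at this
    exact this
  · have := congrArg Complex.im h
    rw [Complex.im_sum] at this
    simp only [Complex.exp_ofReal_mul_I_im] at this
    exact this

lemma cos_sum1 (N : ℕ) (hN : 3 ≤ N) (φ : ℝ) :
    ∑ k : Fin N, Real.cos (2 * π * k / N + φ) = 0 := by
  rw [Fin.sum_univ_eq_sum_range (fun k => Real.cos (2 * π * k / N + φ))]
  have := (cos_sin_sum N 1 one_pos (by omega) φ).1
  simpa using this

lemma sin_sum1 (N : ℕ) (hN : 3 ≤ N) (φ : ℝ) :
    ∑ k : Fin N, Real.sin (2 * π * k / N + φ) = 0 := by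
  rw [Fin.sum_univ_eq_sum_range (fun k => Real.sin (2 * π * k / N + φ))]
  have := (cos_sin_sum N 1 one_pos (by omega) φ).2
  simpa using this

lemma cos_sum2 (N : ℕ) (hN : 3 ≤ N) (φ : ℝ) :
    ∑ k : Fin N, Real.cos (2 * (2 * π * k / N + φ)) = 0 := by
  rw [Fin.sum_univ_eq_sum_range (fun k => Real.cos (2 * (2 * π * k / N + φ)))]
  have := (cos_sin_sum N 2 two_pos (by omega) (2*φ)).1
  rw [← this]
  apply Finset.sum_congr rfl
  intro k _
  congr 1
  push_cast
  ring

lemma sin_sum2 (N : ℕ) (hN : 3 ≤ N) (φ : ℝ) :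
    ∑ k : Fin N, Real.sin (2 * (2 * π * k / N + φ)) = 0 := by
  rw [Fin.sum_univ_eq_sum_range (fun k => Real.sin (2 * (2 * π * k / N + φ)))]
  have := (cos_sin_sum N 2 two_pos (by omega) (2*φ)).2
  rw [← this]
  apply Finset.sum_congr rfl
  intro k _
  congr 1
  push_cast
  ring

lemma cos_sq_sum (N : ℕ) (hN : 3 ≤ N) (φ : ℝ) :
    ∑ k : Fin N, Real.cos (2 * π * k / N + φ) ^ 2 = N / 2 := by
  have h : ∀ k : Fin N, Real.cos (2 * π * k / N + φ) ^ 2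
      = 1/2 + Real.cos (2 * (2 * π * k / N + φ)) / 2 := fun k => Real.cos_sq _
  rw [Finset.sum_congr rfl (fun k _ => h k), Finset.sum_add_distrib]
  have h2 : ∑ k : Fin N, Real.cos (2 * (2 * π * k / N + φ)) / 2 = 0 := by
    rw [← Finset.sum_div, cos_sum2 N hN φ]
    norm_num
  rw [h2, Finset.sum_const, Finset.card_univ]
  simp [nsmul_eq_mul]
  ring

lemma sin_sq_sum (N : ℕ) (hN : 3 ≤ N) (φ : ℝ) :
    ∑ k : Fin N, Real.sin (2 * π * k / N + φ) ^ 2 = N / 2 := by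
  have h : ∀ k : Fin N, Real.sin (2 * π * k / N + φ) ^ 2
      = 1 - Real.cos (2 * π * k / N + φ) ^ 2 := by
    intro k
    have := Real.sin_sq_add_cos_sq (2 * π * k / N + φ)
    linarith
  rw [Finset.sum_congr rfl (fun k _ => h k), Finset.sum_sub_distrib, cos_sq_sum N hN φ]
  rw [Finset.sum_const, Finset.card_univ]
  simp [nsmul_eq_mul]
  ring

lemma sin_cos_sum (N : ℕ) (hN : 3 ≤ N) (φ : ℝ) :
    ∑ k : Fin N, Real.sin (2 * π * k / N + φ) * Real.cos (2 * π * k / N + φ) = 0 := by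
  have h : ∀ k : Fin N, Real.sin (2 * π * k / N + φ) * Real.cos (2 * π * k / N + φ)
      = Real.sin (2 * (2 * π * k / N + φ)) / 2 := by
    intro k
    rw [Real.sin_two_mul]
    ring
  rw [Finset.sum_congr rfl (fun k _ => h k), ← Finset.sum_div, sin_sum2 N hN φ]
  simp

end S10


namespace S10

def ringPt (N : ℕ) (R φ z : ℝ) (k : Fin N) : E3 :=
  pt (R * Real.cos (2 * π * k / N + φ)) (R * Real.sin (2 * π * k / N + φ)) z

lemma Vprism_eq (N : ℕ) (R h β : ℝ) :
    Vprism N R h β = fun x =>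
      (∑ k : Fin N, ‖x - ringPt N R 0 (-(h/2)) k‖⁻¹) +
      (∑ k : Fin N, ‖x - ringPt N R β (h/2) k‖⁻¹) := by
  funext x
  unfold Vprism V0
  congr 1
  · apply Finset.sum_congr rfl
    intro k _
    rw [one_div]
    congr 1
    rw [EuclideanSpace.norm_eq, EuclideanSpace.norm_eq]
    congr 1
    rw [Fin.sum_univ_three, Fin.sum_univ_three]
    simp only [PiLp.sub_apply]
    simp [ringPt, vert, pt, Real.norm_eq_abs, sq_abs]
  · apply Finset.sum_congr rfl
    intro k _
    rw [one_div]
    congr 1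
    rw [EuclideanSpace.norm_eq, EuclideanSpace.norm_eq]
    congr 1
    rw [Fin.sum_univ_three, Fin.sum_univ_three]
    simp only [PiLp.sub_apply]
    simp [ringPt, vert, pt, Real.cos_add, Real.sin_add, Real.norm_eq_abs, sq_abs]
    have hβ := Real.sin_sq_add_cos_sq β
    linear_combination (x 0 ^ 2 + x 1 ^ 2 - R ^ 2 * Real.cos (2 * π * (k:ℕ) / N) ^ 2
      - R ^ 2 * Real.sin (2 * π * (k:ℕ) / N) ^ 2) * hβ

end S10

namespace S10

lemma ring_lin (N : ℕ) (hN : 3 ≤ N) (R φ z : ℝ) (v : E3) :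
    ∑ k : Fin N, (R * Real.cos (2 * π * k / N + φ) * v 0
      + R * Real.sin (2 * π * k / N + φ) * v 1 + z * v 2) = N * (z * v 2) := by
  have hterm : ∀ k : Fin N, R * Real.cos (2 * π * k / N + φ) * v 0
      + R * Real.sin (2 * π * k / N + φ) * v 1 + z * v 2
      = (R * v 0) * Real.cos (2 * π * k / N + φ)
      + (R * v 1) * Real.sin (2 * π * k / N + φ) + z * v 2 := fun k => by ring
  rw [Finset.sum_congr rfl (fun k _ => hterm k)]
  simp only [Finset.sum_add_distrib]
  rw [← Finset.mul_sum, ← Finset.mul_sum, cos_sum1 N hN φ, sin_sum1 N hN φ,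
    Finset.sum_const, Finset.card_univ, Fintype.card_fin, nsmul_eq_mul]
  ring

lemma ring_quad (N : ℕ) (hN : 3 ≤ N) (R φ z : ℝ) (v w : E3) :
    ∑ k : Fin N, ((R * Real.cos (2 * π * k / N + φ) * v 0
        + R * Real.sin (2 * π * k / N + φ) * v 1 + z * v 2)
      * (R * Real.cos (2 * π * k / N + φ) * w 0
        + R * Real.sin (2 * π * k / N + φ) * w 1 + z * w 2))
      = N * (R^2/2) * (v 0 * w 0 + v 1 * w 1) + N * (z^2 * (v 2 * w 2)) := by
  have hterm : ∀ k : Fin N, (R * Real.cos (2 * π * k / N + φ) * v 0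
        + R * Real.sin (2 * π * k / N + φ) * v 1 + z * v 2)
      * (R * Real.cos (2 * π * k / N + φ) * w 0
        + R * Real.sin (2 * π * k / N + φ) * w 1 + z * w 2)
      = (R^2 * (v 0 * w 0)) * Real.cos (2 * π * k / N + φ)^2
      + (R^2 * (v 1 * w 1)) * Real.sin (2 * π * k / N + φ)^2
      + (R^2 * (v 0 * w 1 + v 1 * w 0))
          * (Real.sin (2 * π * k / N + φ) * Real.cos (2 * π * k / N + φ))
      + (R * z * (v 0 * w 2 + v 2 * w 0)) * Real.cos (2 * π * k / N + φ)
      + (R * z * (v 1 * w 2 + v 2 * w 1)) * Real.sin (2 * π * k / N + φ)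
      + z^2 * (v 2 * w 2) := fun k => by ring
  rw [Finset.sum_congr rfl (fun k _ => hterm k)]
  simp only [Finset.sum_add_distrib]
  rw [← Finset.mul_sum, ← Finset.mul_sum, ← Finset.mul_sum, ← Finset.mul_sum, ← Finset.mul_sum,
    cos_sq_sum N hN φ, sin_sq_sum N hN φ, sin_cos_sum N hN φ, cos_sum1 N hN φ, sin_sum1 N hN φ,
    Finset.sum_const, Finset.card_univ, Fintype.card_fin, nsmul_eq_mul]
  ring

lemma q_ringPt (N : ℕ) (R φ z : ℝ) (k : Fin N) :
    q (ringPt N R φ z k) 0 = R^2 + z^2 := by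
  unfold q
  rw [Fin.sum_univ_three]
  simp [ringPt, pt]
  linear_combination (R^2) * Real.sin_sq_add_cos_sq (2 * π * k / N + φ)

lemma ringPt_ne (N : ℕ) (R φ z : ℝ) (hR : 0 < R) (k : Fin N) :
    (0 : E3) ≠ ringPt N R φ z k := by
  intro hcon
  have h1 : q (ringPt N R φ z k) 0 = R^2 + z^2 := q_ringPt N R φ z k
  rw [q_eq_norm, hcon] at h1
  simp at h1
  nlinarith

end S10


namespace S10

lemma master (N : ℕ) (hN : 3 ≤ N) (β R h : ℝ) (hR : 0 < R) (hh : 0 < h) :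
    fderiv ℝ (Vprism N R h β) 0 = 0 ∧
    ∀ v w : E3, hess (Vprism N R h β) 0 v w =
      (N * (R^2 - h^2/2) * (R^2 + h^2/4) ^ (-(5/2) : ℝ)) * (v 0 * w 0 + v 1 * w 1) +
      (N * (h^2 - 2*R^2) * (R^2 + h^2/4) ^ (-(5/2) : ℝ)) * (v 2 * w 2) := by
  set t : ℝ := R^2 + h^2/4 with ht
  have htpos : 0 < t := by positivity
  set p1 : Fin N → E3 := ringPt N R 0 (-(h/2)) with hp1
  set p2 : Fin N → E3 := ringPt N R β (h/2) with hp2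
  have hb1 : R^2 + (-(h/2))^2 = t := by rw [ht]; ring
  have hb2 : R^2 + (h/2)^2 = t := by rw [ht]; ring
  have hq1 : ∀ k, q (p1 k) 0 = t := fun k => by rw [hp1, q_ringPt, hb1]
  have hq2 : ∀ k, q (p2 k) 0 = t := fun k => by rw [hp2, q_ringPt, hb2]
  have hne1 : ∀ k, (0:E3) ≠ p1 k := fun k => ringPt_ne N R 0 (-(h/2)) hR k
  have hne2 : ∀ k, (0:E3) ≠ p2 k := fun k => ringPt_ne N R β (h/2) hR k
  -- the open set where all points are avoided
  set U : Set E3 := (⋂ k : Fin N, {p1 k}ᶜ) ∩ (⋂ k : Fin N, {p2 k}ᶜ) with hU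
  have hUopen : IsOpen U := by
    apply IsOpen.inter <;>
      exact isOpen_iInter_of_finite (fun k => isOpen_compl_singleton)
  have hU0 : (0:E3) ∈ U := by
    constructor <;> rw [Set.mem_iInter] <;> intro k
    · exact hne1 k
    · exact hne2 k
  have hmemne : ∀ y ∈ U, (∀ k, y ≠ p1 k) ∧ (∀ k, y ≠ p2 k) := by
    intro y hy
    obtain ⟨h1, h2⟩ := hy
    rw [Set.mem_iInter] at h1 h2
    exact ⟨fun k => h1 k, fun k => h2 k⟩
  -- first derivative on U
  have hD1 : ∀ y ∈ U, HasFDerivAt (Vprism N R h β)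
      ((∑ k, G (p1 k) y) + (∑ k, G (p2 k) y)) y := by
    intro y hy
    obtain ⟨h1, h2⟩ := hmemne y hy
    rw [Vprism_eq]
    exact ((HasFDerivAt.fun_sum (fun k _ => L1 (p1 k) y (h1 k))).add
      (HasFDerivAt.fun_sum (fun k _ => L1 (p2 k) y (h2 k))))
  -- fderiv agrees with G-sum near 0
  have hEv : fderiv ℝ (Vprism N R h β) =ᶠ[nhds 0]
      (fun y => (∑ k, G (p1 k) y) + (∑ k, G (p2 k) y)) := by
    filter_upwards [hUopen.mem_nhds hU0] with y hy
    exact (hD1 y hy).fderiv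
  -- second derivative
  have hD2 : HasFDerivAt (fun y => (∑ k, G (p1 k) y) + (∑ k, G (p2 k) y))
      ((∑ k, HH (p1 k) 0) + (∑ k, HH (p2 k) 0)) 0 := by
    exact ((HasFDerivAt.fun_sum (fun k _ => L2 (p1 k) 0 (hne1 k))).add
      (HasFDerivAt.fun_sum (fun k _ => L2 (p2 k) 0 (hne2 k))))
  have hhess : hess (Vprism N R h β) 0 = (∑ k, HH (p1 k) 0) + (∑ k, HH (p2 k) 0) := by
    rw [hess, hEv.fderiv_eq]
    exact hD2.fderiv
  constructor
  · -- critical point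
    rw [(hD1 0 hU0).fderiv]
    ext v
    simp only [ContinuousLinearMap.add_apply, ContinuousLinearMap.sum_apply,
      ContinuousLinearMap.zero_apply]
    have hGv : ∀ (φ z : ℝ) (hb : R^2 + z^2 = t) (k : Fin N),
        G (ringPt N R φ z k) 0 v = (t ^ (-(3/2):ℝ)) *
          (R * Real.cos (2 * π * k / N + φ) * v 0
            + R * Real.sin (2 * π * k / N + φ) * v 1 + z * v 2) := by
      intro φ z hb k
      have hq : q (ringPt N R φ z k) 0 = t := by rw [q_ringPt, hb]
      rw [G, sc, hq]
      rw [ContinuousLinearMap.smul_apply, dual_apply, Fin.sum_univ_three]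
      simp only [PiLp.sub_apply, PiLp.zero_apply, ringPt, pt0, pt1, pt2]
      rw [smul_eq_mul]
      ring
    rw [Finset.sum_congr rfl (fun k _ => hGv 0 (-(h/2)) hb1 k),
        Finset.sum_congr rfl (fun k _ => hGv β (h/2) hb2 k),
        ← Finset.mul_sum, ← Finset.mul_sum,
        ring_lin N hN R 0 (-(h/2)) v, ring_lin N hN R β (h/2) v]
    ring
  · -- hessian formula
    intro v w
    rw [hhess]
    simp only [ContinuousLinearMap.add_apply, ContinuousLinearMap.sum_apply]
    have hHHvw : ∀ (φ z : ℝ) (hb : R^2 + z^2 = t) (k : Fin N),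
        HH (ringPt N R φ z k) 0 v w =
          (-(t ^ (-(3/2):ℝ))) * (v 0 * w 0 + v 1 * w 1 + v 2 * w 2)
          + (3 * t ^ (-(5/2):ℝ)) *
            ((R * Real.cos (2 * π * k / N + φ) * v 0
              + R * Real.sin (2 * π * k / N + φ) * v 1 + z * v 2)
            * (R * Real.cos (2 * π * k / N + φ) * w 0
              + R * Real.sin (2 * π * k / N + φ) * w 1 + z * w 2)) := by
      intro φ z hb k
      have hq : q (ringPt N R φ z k) 0 = t := by rw [q_ringPt, hb]
      rw [HH, sc, hq]
      simp only [ContinuousLinearMap.add_apply, ContinuousLinearMap.smul_apply,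
        ContinuousLinearMap.smulRight_apply, dualL_apply]
      rw [dual_apply, dual_apply, dual_apply, Fin.sum_univ_three, Fin.sum_univ_three,
        Fin.sum_univ_three]
      simp only [PiLp.sub_apply, PiLp.zero_apply, ringPt, pt0, pt1, pt2]
      simp only [smul_eq_mul]
      ring
    rw [Finset.sum_congr rfl (fun k _ => hHHvw 0 (-(h/2)) hb1 k),
        Finset.sum_congr rfl (fun k _ => hHHvw β (h/2) hb2 k)]
    simp only [Finset.sum_add_distrib, ← Finset.mul_sum, Finset.sum_const, Finset.card_univ,
      Fintype.card_fin, nsmul_eq_mul]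
    rw [ring_quad N hN R 0 (-(h/2)) v w, ring_quad N hN R β (h/2) v w]
    have hc : t ^ (-(3/2):ℝ) = t * t ^ (-(5/2):ℝ) := by
      rw [show (-(3/2):ℝ) = 1 + (-(5/2)) by norm_num, Real.rpow_add htpos, Real.rpow_one]
    rw [hc, ht]
    ring

end S10


namespace S10

def e0 : E3 := pt 1 0 0
def e1 : E3 := pt 0 1 0
def e2 : E3 := pt 0 0 1

lemma e2_ne : e2 ≠ 0 := by
  intro hcon
  have : e2 2 = (0:E3) 2 := by rw [hcon]
  simp [e2] at this

lemma e0_ne : e0 ≠ 0 := by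
  intro hcon
  have : e0 0 = (0:E3) 0 := by rw [hcon]
  simp [e0] at this

section
variable (f : E3 → ℝ) (α γ : ℝ)
variable (hf : ∀ v w : E3, hess f 0 v w = α * (v 0 * w 0 + v 1 * w 1) + γ * (v 2 * w 2))

include hf

lemma nondeg_of (hα : α ≠ 0) (hγ : γ ≠ 0) : Nondeg f 0 := by
  intro v hv hcon
  apply hv
  have h0 : α * v 0 = 0 := by
    have := hf v e0
    rw [hcon] at this
    simpa [e0] using this.symm
  have h1 : α * v 1 = 0 := by
    have := hf v e1
    rw [hcon] at this
    simpa [e1] using this.symm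
  have h2 : γ * v 2 = 0 := by
    have := hf v e2
    rw [hcon] at this
    simpa [e2] using this.symm
  ext i
  fin_cases i
  · simpa using (mul_eq_zero.mp h0).resolve_left hα
  · simpa using (mul_eq_zero.mp h1).resolve_left hα
  · simpa using (mul_eq_zero.mp h2).resolve_left hγ

lemma not_nondeg_of (hα : α = 0) (hγ : γ = 0) : ¬ Nondeg f 0 := by
  intro hnd
  apply hnd e0 e0_ne
  ext w
  rw [hf e0 w]
  simp [hα, hγ]

lemma index_one_of (hα : 0 < α) (hγ : γ < 0) : morseIndex f 0 = 1 := by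
  apply IsGreatest.csSup_eq
  constructor
  · -- 1 is attained by span of e2
    refine ⟨Submodule.span ℝ {e2}, finrank_span_singleton e2_ne, ?_⟩
    intro v hvW hv
    obtain ⟨c, hc⟩ := Submodule.mem_span_singleton.mp hvW
    have hc0 : c ≠ 0 := by
      intro hcc
      exact hv (by rw [← hc, hcc, zero_smul])
    have h0 : v 0 = 0 := by rw [← hc]; simp [e2]
    have h1 : v 1 = 0 := by rw [← hc]; simp [e2]
    have h2 : v 2 = c := by rw [← hc]; simp [e2]
    rw [hf v v, h0, h1, h2]
    have : γ * (c * c) < 0 := mul_neg_of_neg_of_pos hγ (mul_self_pos.mpr hc0)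
    linarith
  · -- upper bound
    rintro k ⟨W, hWk, hWneg⟩
    by_contra hcon
    push_neg at hcon
    have hk2 : 2 ≤ k := hcon
    have hrank := LinearMap.finrank_range_add_finrank_ker ((cf 2).toLinearMap.domRestrict W)
    have hrle : Module.finrank ℝ ↥(LinearMap.range ((cf 2).toLinearMap.domRestrict W)) ≤ 1 := by
      have := Submodule.finrank_le (LinearMap.range ((cf 2).toLinearMap.domRestrict W))
      simpa using this
    have hWfr : Module.finrank ℝ ↥W = k := hWk
    have hker : 0 < Module.finrank ℝ ↥(LinearMap.ker ((cf 2).toLinearMap.domRestrict W)) := by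
      omega
    have hkerne : LinearMap.ker ((cf 2).toLinearMap.domRestrict W) ≠ ⊥ := by
      intro hbot
      rw [hbot] at hker
      simp [finrank_bot] at hker
    obtain ⟨u, huker, hu0⟩ := Submodule.ne_bot_iff _ |>.mp hkerne
    have hu2 : (u : E3) 2 = 0 := by
      have := LinearMap.mem_ker.mp huker
      simpa [LinearMap.domRestrict_apply] using this
    have hune : (u : E3) ≠ 0 := fun hc => hu0 (Subtype.ext hc)
    have hneg := hWneg (u : E3) u.2 hune
    rw [hf, hu2] at hneg
    nlinarith [mul_self_nonneg ((u:E3) 0), mul_self_nonneg ((u:E3) 1)]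

lemma index_two_of (hα : α < 0) (hγ : 0 < γ) : morseIndex f 0 = 2 := by
  apply IsGreatest.csSup_eq
  constructor
  · refine ⟨LinearMap.ker (cf 2).toLinearMap, ?_, ?_⟩
    · have hrank := LinearMap.finrank_range_add_finrank_ker (cf 2).toLinearMap
      have hrtop : LinearMap.range (cf 2).toLinearMap = ⊤ := by
        rw [LinearMap.range_eq_top]
        intro r
        exact ⟨r • e2, by simp [cf, e2]⟩
      rw [hrtop, finrank_top, finrank_euclideanSpace_fin] at hrank
      have : Module.finrank ℝ ℝ = 1 := Module.finrank_self ℝ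
      omega
    · intro v hvW hv
      have hv2 : v 2 = 0 := by
        have := LinearMap.mem_ker.mp hvW
        simpa using this
      have hpos : 0 < v 0 * v 0 + v 1 * v 1 := by
        rcases lt_or_eq_of_le (by nlinarith [mul_self_nonneg (v 0), mul_self_nonneg (v 1)] :
          (0:ℝ) ≤ v 0 * v 0 + v 1 * v 1) with hlt | heq
        · exact hlt
        · exfalso
          apply hv
          have h0 : v 0 = 0 := by nlinarith [mul_self_nonneg (v 0), mul_self_nonneg (v 1)]
          have h1 : v 1 = 0 := by nlinarith [mul_self_nonneg (v 0), mul_self_nonneg (v 1)]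
          ext i
          fin_cases i <;> simpa [h0, h1, hv2]
      rw [hf v v, hv2]
      have : α * (v 0 * v 0 + v 1 * v 1) < 0 := mul_neg_of_neg_of_pos hα hpos
      linarith
  · rintro k ⟨W, hWk, hWneg⟩
    by_contra hcon
    push_neg at hcon
    have hk3 : k ≤ 3 := by
      rw [← hWk]
      have := Submodule.finrank_le W
      simpa [finrank_euclideanSpace_fin] using this
    have hkeq : k = 3 := by omega
    have hWtop : W = ⊤ := by
      apply Submodule.eq_top_of_finrank_eq
      rw [hWk, hkeq, finrank_euclideanSpace_fin]
    have hneg := hWneg e2 (hWtop ▸ Submodule.mem_top) e2_ne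
    rw [hf e2 e2] at hneg
    simp [e2] at hneg
    linarith

end

end S10


set_option maxHeartbeats 1000000 in
/-- the origin is a critical point of the potential of the `β`-rotated
prism; it is non-degenerate iff `h ≠ √2 R`; it is a 1-saddle when `h < √2 R`, and a
2-saddle when `h > √2 R`. -/
theorem stmt10 (N : ℕ) (hN : 3 ≤ N) (β R h : ℝ) (hR : 0 < R) (hh : 0 < h) :
    fderiv ℝ (Vprism N R h β) 0 = 0 ∧
    (Nondeg (Vprism N R h β) 0 ↔ h ≠ Real.sqrt 2 * R) ∧
    (h < Real.sqrt 2 * R →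
      Nondeg (Vprism N R h β) 0 ∧ morseIndex (Vprism N R h β) 0 = 1) ∧
    (Real.sqrt 2 * R < h →
      Nondeg (Vprism N R h β) 0 ∧ morseIndex (Vprism N R h β) 0 = 2) := by
  obtain ⟨hcrit, hf⟩ := S10.master N hN β R h hR hh
  set t5 : ℝ := (R^2 + h^2/4) ^ (-(5/2) : ℝ) with ht5
  have ht5pos : 0 < t5 := Real.rpow_pos_of_pos (by positivity) _
  have hNpos : (0:ℝ) < N := by
    have : (3:ℝ) ≤ N := by exact_mod_cast hN
    linarith
  set α : ℝ := N * (R^2 - h^2/2) * t5 with hα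
  set γ : ℝ := N * (h^2 - 2*R^2) * t5 with hγ
  have s2 : Real.sqrt 2 ^ 2 = 2 := Real.sq_sqrt (by norm_num)
  have s2pos : 0 < Real.sqrt 2 := Real.sqrt_pos.mpr (by norm_num)
  -- trichotomy translations
  have hlt : h < Real.sqrt 2 * R → h^2 < 2*R^2 := by
    intro hx
    have key := mul_pos (sub_pos.mpr hx) (show (0:ℝ) < Real.sqrt 2 * R + h by positivity)
    nlinarith [key, s2]
  have hgt : Real.sqrt 2 * R < h → 2*R^2 < h^2 := by
    intro hx
    have key := mul_pos (sub_pos.mpr hx) (show (0:ℝ) < h + Real.sqrt 2 * R by positivity)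
    nlinarith [key, s2]
  have heq : h = Real.sqrt 2 * R → h^2 = 2*R^2 := by
    intro hx
    rw [hx, mul_pow, s2]
  have hlt' : h < Real.sqrt 2 * R → (0 < α ∧ γ < 0) := by
    intro hx
    have hq := hlt hx
    constructor
    · exact mul_pos (mul_pos hNpos (by linarith)) ht5pos
    · exact mul_neg_of_neg_of_pos (mul_neg_of_pos_of_neg hNpos (by linarith)) ht5pos
  have hgt' : Real.sqrt 2 * R < h → (α < 0 ∧ 0 < γ) := by
    intro hx
    have hq := hgt hx
    constructor
    · exact mul_neg_of_neg_of_pos (mul_neg_of_pos_of_neg hNpos (by linarith)) ht5pos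
    · exact mul_pos (mul_pos hNpos (by linarith)) ht5pos
  refine ⟨hcrit, ?_, ?_, ?_⟩
  · constructor
    · intro hnd
      intro hcon
      have h2 := heq hcon
      have hα0 : α = 0 := by
        rw [hα, show R^2 - h^2/2 = 0 by nlinarith [heq hcon]]
        ring
      have hγ0 : γ = 0 := by
        rw [hγ, show h^2 - 2*R^2 = 0 by nlinarith [heq hcon]]
        ring
      exact S10.not_nondeg_of _ α γ hf hα0 hγ0 hnd
    · intro hne
      rcases lt_or_gt_of_ne hne with hx | hx
      · obtain ⟨h1, h2⟩ := hlt' hx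
        exact S10.nondeg_of _ α γ hf (ne_of_gt h1) (ne_of_lt h2)
      · obtain ⟨h1, h2⟩ := hgt' hx
        exact S10.nondeg_of _ α γ hf (ne_of_lt h1) (ne_of_gt h2)
  · intro hx
    obtain ⟨h1, h2⟩ := hlt' hx
    exact ⟨S10.nondeg_of _ α γ hf (ne_of_gt h1) (ne_of_lt h2),
      S10.index_one_of _ α γ hf h1 h2⟩
  · intro hx
    obtain ⟨h1, h2⟩ := hgt' hx
    exact ⟨S10.nondeg_of _ α γ hf (ne_of_lt h1) (ne_of_gt h2),
      S10.index_two_of _ α γ hf h1 h2⟩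
end
end

section
/- Let N ≥ 3, β ∈ ℝ, R > 0, and h > √2·R, and let V be the electrostatic potential of the 2N unit point charges at the vertices of the β-rotated prism of radius R and height h. Then, besides the origin, there exist two further critical points of V on the x_3-axis: there are z_+ ∈ (0, h/2) and z_− ∈ (−h/2, 0) such that ∇V(0, 0, z_+) = 0 and ∇V(0, 0, z_−) = 0; moreover these two critical points are 1-saddles (their Hessians have exactly one negative eigenvalue). -/
noncomputable section

open Finset

open Real

/-! ### coordinates -/

@[simp] lemma pt_apply_0 (a b c : ℝ) : pt a b c 0 = a := rfl
@[simp] lemma pt_apply_1 (a b c : ℝ) : pt a b c 1 = b := rfl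
@[simp] lemma pt_apply_2 (a b c : ℝ) : pt a b c 2 = c := rfl

lemma pt_eta (x : E3) : pt (x 0) (x 1) (x 2) = x := by
  ext i; fin_cases i <;> simp

lemma norm_pt (a b c : ℝ) : ‖pt a b c‖ = √(a^2 + b^2 + c^2) := by
  rw [EuclideanSpace.norm_eq, Fin.sum_univ_three]
  simp [Real.norm_eq_abs, sq_abs]

lemma inner_pt (a b c : ℝ) (v : E3) :
    (inner ℝ (pt a b c) v : ℝ) = a * v 0 + b * v 1 + c * v 2 := by
  rw [PiLp.inner_apply, Fin.sum_univ_three]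
  simp [RCLike.inner_apply]
  ring

lemma inner_coords (v u : E3) :
    (inner ℝ v u : ℝ) = v 0 * u 0 + v 1 * u 1 + v 2 * u 2 := by
  conv_lhs => rw [← pt_eta v]
  rw [inner_pt]

/-! ### trigonometric sums -/

lemma sum_exp_zero (N m : ℕ) (hm : 0 < m) (hmN : m < N) :
    ∑ k ∈ range N, Complex.exp (2 * π * m / N * Complex.I) ^ k = 0 := by
  have hN : (0:ℝ) < N := by exact_mod_cast Nat.pos_of_ne_zero (by omega)
  have hx : Complex.exp (2 * π * m / N * Complex.I) ≠ 1 := by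
    intro h
    rw [Complex.exp_eq_one_iff] at h
    rcases h with ⟨n, hn⟩
    have hI : (Complex.I) ≠ 0 := Complex.I_ne_zero
    have h2 : (2 * (π:ℂ) * m / N) = n * (2 * π) := by
      have := mul_right_cancel₀ hI (by linear_combination hn :
        (2 * (π:ℂ) * m / N) * Complex.I = (n * (2*π)) * Complex.I)
      exact this
    have hπ : (π:ℝ) ≠ 0 := Real.pi_ne_zero
    have h2' : 2 * (π:ℝ) * m / N = n * (2 * π) := by exact_mod_cast h2
    have hmn : (m:ℝ) / N = n := by
      field_simp at h2' ⊢
      nlinarith [Real.pi_pos]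
    have h01 : (0:ℝ) < (m:ℝ)/N := by positivity
    have h11 : (m:ℝ)/N < 1 := by rw [div_lt_one hN]; exact_mod_cast hmN
    rw [hmn] at h01 h11
    have : (0:ℤ) < n := by exact_mod_cast h01
    have : (n:ℝ) ≥ 1 := by exact_mod_cast this
    linarith
  rw [geom_sum_eq hx]
  have hpow : Complex.exp (2 * π * m / N * Complex.I) ^ N = 1 := by
    rw [← Complex.exp_nat_mul]
    have hNe : (N:ℂ) ≠ 0 := by exact_mod_cast hN.ne'
    have : (N:ℂ) * (2 * π * m / N * Complex.I) = (m:ℤ) * (2 * π * Complex.I) := by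
      push_cast; field_simp
    rw [this, Complex.exp_int_mul_two_pi_mul_I]
  rw [hpow]; simp

lemma sum_exp_phase (N m : ℕ) (hm : 0 < m) (hmN : m < N) (γ : ℝ) :
    ∑ k ∈ range N, Complex.exp (((m * (2 * π * k / N) + γ : ℝ) : ℂ) * Complex.I) = 0 := by
  have h0 := sum_exp_zero N m hm hmN
  have heq : ∀ k ∈ range N, Complex.exp (((m * (2 * π * k / N) + γ : ℝ) : ℂ) * Complex.I)
      = Complex.exp ((γ:ℝ) * Complex.I) * Complex.exp (2 * π * m / N * Complex.I) ^ k := by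
    intro k _
    rw [← Complex.exp_nat_mul, ← Complex.exp_add]
    congr 1
    push_cast
    ring
  rw [Finset.sum_congr rfl heq, ← Finset.mul_sum, h0, mul_zero]

lemma sum_cos_phase (N m : ℕ) (hm : 0 < m) (hmN : m < N) (γ : ℝ) :
    ∑ k ∈ range N, Real.cos (m * (2 * π * k / N) + γ) = 0 := by
  have key := sum_exp_phase N m hm hmN γ
  have : ∑ k ∈ range N, Real.cos (m * (2 * π * k / N) + γ)
      = (∑ k ∈ range N, Complex.exp (((m * (2 * π * k / N) + γ : ℝ) : ℂ) * Complex.I)).re := by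
    rw [Complex.re_sum]
    exact Finset.sum_congr rfl fun k _ => (Complex.exp_ofReal_mul_I_re _).symm
  rw [this, key, Complex.zero_re]

lemma sum_sin_phase (N m : ℕ) (hm : 0 < m) (hmN : m < N) (γ : ℝ) :
    ∑ k ∈ range N, Real.sin (m * (2 * π * k / N) + γ) = 0 := by
  have key := sum_exp_phase N m hm hmN γ
  have : ∑ k ∈ range N, Real.sin (m * (2 * π * k / N) + γ)
      = (∑ k ∈ range N, Complex.exp (((m * (2 * π * k / N) + γ : ℝ) : ℂ) * Complex.I)).im := by
    rw [Complex.im_sum]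
    exact Finset.sum_congr rfl fun k _ => (Complex.exp_ofReal_mul_I_im _).symm
  rw [this, key, Complex.zero_im]

variable {N : ℕ}

lemma SC1 (hN : 3 ≤ N) (γ : ℝ) : ∑ k : Fin N, Real.cos (2 * π * k / N + γ) = 0 := by
  rw [Fin.sum_univ_eq_sum_range (fun k : ℕ => Real.cos (2 * π * k / N + γ))]
  rw [← sum_cos_phase N 1 one_pos (by omega) γ]
  exact Finset.sum_congr rfl fun k _ => by norm_num

lemma SC2 (hN : 3 ≤ N) (γ : ℝ) : ∑ k : Fin N, Real.sin (2 * π * k / N + γ) = 0 := by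
  rw [Fin.sum_univ_eq_sum_range (fun k : ℕ => Real.sin (2 * π * k / N + γ))]
  rw [← sum_sin_phase N 1 one_pos (by omega) γ]
  exact Finset.sum_congr rfl fun k _ => by norm_num

lemma cos2_aux (hN : 3 ≤ N) (γ : ℝ) :
    ∑ k ∈ range N, Real.cos (2 * (2 * π * k / N) + 2*γ) = 0 := by
  rw [← sum_cos_phase N 2 two_pos (by omega) (2*γ)]
  exact Finset.sum_congr rfl fun k _ => by norm_num

lemma sin2_aux (hN : 3 ≤ N) (γ : ℝ) :
    ∑ k ∈ range N, Real.sin (2 * (2 * π * k / N) + 2*γ) = 0 := by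
  rw [← sum_sin_phase N 2 two_pos (by omega) (2*γ)]
  exact Finset.sum_congr rfl fun k _ => by norm_num

lemma SC3 (hN : 3 ≤ N) (γ : ℝ) :
    ∑ k : Fin N, Real.cos (2 * π * k / N + γ) ^ 2 = N / 2 := by
  rw [Fin.sum_univ_eq_sum_range (fun k : ℕ => Real.cos (2 * π * k / N + γ) ^ 2)]
  have h : ∀ k ∈ range N, Real.cos (2 * π * k / N + γ) ^ 2
      = 1/2 + Real.cos (2 * (2 * π * k / N) + 2*γ) / 2 := by
    intro k _
    rw [Real.cos_sq, show 2 * (2 * π * (k:ℝ) / N + γ) = 2 * (2 * π * k / N) + 2*γ from by ring]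
  have h2 : ∑ x ∈ range N, Real.cos (2 * (2 * π * (x:ℝ) / N) + 2*γ) / 2 = 0 := by
    rw [← Finset.sum_div, cos2_aux hN γ]; norm_num
  rw [Finset.sum_congr rfl h, Finset.sum_add_distrib, h2]
  simp [Finset.sum_const, Finset.card_range]
  ring

lemma SC4 (hN : 3 ≤ N) (γ : ℝ) :
    ∑ k : Fin N, Real.sin (2 * π * k / N + γ) ^ 2 = N / 2 := by
  rw [Fin.sum_univ_eq_sum_range (fun k : ℕ => Real.sin (2 * π * k / N + γ) ^ 2)]
  have h : ∀ k ∈ range N, Real.sin (2 * π * k / N + γ) ^ 2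
      = 1/2 - Real.cos (2 * (2 * π * k / N) + 2*γ) / 2 := by
    intro k _
    rw [Real.sin_sq, Real.cos_sq,
      show 2 * (2 * π * (k:ℝ) / N + γ) = 2 * (2 * π * k / N) + 2*γ from by ring]
    ring
  have h2 : ∑ x ∈ range N, Real.cos (2 * (2 * π * (x:ℝ) / N) + 2*γ) / 2 = 0 := by
    rw [← Finset.sum_div, cos2_aux hN γ]; norm_num
  rw [Finset.sum_congr rfl h, Finset.sum_sub_distrib, h2]
  simp [Finset.sum_const, Finset.card_range]
  ring

lemma SC5 (hN : 3 ≤ N) (γ : ℝ) :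
    ∑ k : Fin N, Real.cos (2 * π * k / N + γ) * Real.sin (2 * π * k / N + γ) = 0 := by
  rw [Fin.sum_univ_eq_sum_range
    (fun k : ℕ => Real.cos (2 * π * k / N + γ) * Real.sin (2 * π * k / N + γ))]
  have h : ∀ k ∈ range N, Real.cos (2 * π * k / N + γ) * Real.sin (2 * π * k / N + γ)
      = Real.sin (2 * (2 * π * k / N) + 2*γ) / 2 := by
    intro k _
    rw [show 2 * (2 * π * (k:ℝ) / N) + 2*γ = 2 * (2 * π * k / N + γ) from by ring,
      Real.sin_two_mul]
    ring
  rw [Finset.sum_congr rfl h, ← Finset.sum_div, sin2_aux hN γ]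
  norm_num

/-! ### ring sums -/

lemma ring_sum_lin (hN : 3 ≤ N) (R γ w a b c : ℝ) :
    ∑ k : Fin N, (-(R * Real.cos (2 * π * k / N + γ)) * a
      + -(R * Real.sin (2 * π * k / N + γ)) * b + w * c)
    = N * (w * c) := by
  have h : ∀ k : Fin N, (-(R * Real.cos (2 * π * k / N + γ)) * a
      + -(R * Real.sin (2 * π * k / N + γ)) * b + w * c)
      = (-(R*a)) * Real.cos (2 * π * k / N + γ)
        + (-(R*b)) * Real.sin (2 * π * k / N + γ) + w*c := fun k => by ring
  rw [Finset.sum_congr rfl fun k _ => h k]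
  simp only [Finset.sum_add_distrib, ← Finset.mul_sum, SC1 hN, SC2 hN, mul_zero,
    Finset.sum_const, Finset.card_univ, Fintype.card_fin, nsmul_eq_mul]
  ring

lemma ring_sum_bil (hN : 3 ≤ N) (R γ w a b c a' b' c' : ℝ) :
    ∑ k : Fin N, (-(R * Real.cos (2 * π * k / N + γ)) * a
        + -(R * Real.sin (2 * π * k / N + γ)) * b + w * c)
      * (-(R * Real.cos (2 * π * k / N + γ)) * a'
        + -(R * Real.sin (2 * π * k / N + γ)) * b' + w * c')
    = N * (R^2/2) * (a*a' + b*b') + N * (w^2 * (c*c')) := by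
  have h : ∀ k : Fin N, (-(R * Real.cos (2 * π * k / N + γ)) * a
        + -(R * Real.sin (2 * π * k / N + γ)) * b + w * c)
      * (-(R * Real.cos (2 * π * k / N + γ)) * a'
        + -(R * Real.sin (2 * π * k / N + γ)) * b' + w * c')
      = (R^2*(a*a')) * Real.cos (2 * π * k / N + γ)^2
        + (R^2*(b*b')) * Real.sin (2 * π * k / N + γ)^2
        + (R^2*(a*b'+b*a')) * (Real.cos (2 * π * k / N + γ) * Real.sin (2 * π * k / N + γ))
        + (-(R*w)*(a*c'+c*a')) * Real.cos (2 * π * k / N + γ)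
        + (-(R*w)*(b*c'+c*b')) * Real.sin (2 * π * k / N + γ)
        + (w*c)*(w*c') := fun k => by ring
  rw [Finset.sum_congr rfl fun k _ => h k]
  simp only [Finset.sum_add_distrib, ← Finset.mul_sum, SC1 hN, SC2 hN, SC3 hN, SC4 hN, SC5 hN,
    mul_zero, Finset.sum_const, Finset.card_univ, Fintype.card_fin, nsmul_eq_mul]
  ring

/-! ### one-dimensional analysis -/

def G (R h z : ℝ) : ℝ :=
  (z + h/2) * ((√(R^2 + (z + h/2)^2))^3)⁻¹ + (z - h/2) * ((√(R^2 + (z - h/2)^2))^3)⁻¹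

lemma continuous_G (R h : ℝ) (hR : 0 < R) : Continuous (G R h) := by
  have hne : ∀ w : ℝ, (√(R^2 + w^2))^3 ≠ 0 := by
    intro w
    have : 0 < √(R^2 + w^2) := Real.sqrt_pos.2 (by positivity)
    positivity
  apply Continuous.add
  · exact (continuous_id.add continuous_const).mul
      (((((continuous_const.add ((continuous_id.add continuous_const).pow 2)).sqrt).pow 3)).inv₀
        fun z => hne (z + h/2))
  · exact (continuous_id.sub continuous_const).mul
      (((((continuous_const.add ((continuous_id.sub continuous_const).pow 2)).sqrt).pow 3)).inv₀
        fun z => hne (z - h/2))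

lemma phi_lt (R : ℝ) (hR : 0 < R) {v u : ℝ} (hv : R / √2 ≤ v) (hu : v < u) :
    u * ((√(R^2 + u^2))^3)⁻¹ < v * ((√(R^2 + v^2))^3)⁻¹ := by
  have h2 : (√2)^2 = 2 := Real.sq_sqrt (by norm_num)
  have h2p : (0:ℝ) < √2 := Real.sqrt_pos.2 (by norm_num)
  have hv0 : 0 < v := lt_of_lt_of_le (by positivity) hv
  have hu0 : 0 < u := hv0.trans hu
  have hRv : R^2 ≤ 2 * v^2 := by
    have : R ≤ v * √2 := (div_le_iff₀ h2p).1 hv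
    nlinarith
  set su := √(R^2 + u^2) with hsu
  set sv := √(R^2 + v^2) with hsv
  have hsup : 0 < su := Real.sqrt_pos.2 (by positivity)
  have hsvp : 0 < sv := Real.sqrt_pos.2 (by positivity)
  have hsu2 : su^2 = R^2 + u^2 := Real.sq_sqrt (by positivity)
  have hsv2 : sv^2 = R^2 + v^2 := Real.sq_sqrt (by positivity)
  rw [← div_eq_mul_inv, ← div_eq_mul_inv, div_lt_div_iff₀ (by positivity) (by positivity)]
  have hsq : (u * sv^3)^2 < (v * su^3)^2 := by
    have e1 : (u * sv^3)^2 = u^2 * (R^2+v^2)^3 := by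
      rw [mul_pow]; rw [show (sv^3)^2 = (sv^2)^3 from by ring, hsv2]
    have e2 : (v * su^3)^2 = v^2 * (R^2+u^2)^3 := by
      rw [mul_pow]; rw [show (su^3)^2 = (su^2)^3 from by ring, hsu2]
    rw [e1, e2]
    have key : v^2*(R^2+u^2)^3 - u^2*(R^2+v^2)^3
        = (u^2-v^2)*(3*R^2*u^2*v^2 + u^2*v^2*(u^2+v^2) - R^6) := by ring
    have hv2u2 : v^2 < u^2 := by nlinarith
    have hbr : 0 < 3*R^2*u^2*v^2 + u^2*v^2*(u^2+v^2) - R^6 := by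
      have hpos : 0 ≤ (2*v^2 - R^2)*(R^4 + 2*v^2*R^2 + v^4) :=
        mul_nonneg (by linarith) (by positivity)
      have t1 : 0 < (u^2 - v^2)*(R^2*v^2) := mul_pos (by linarith) (by positivity)
      have t2 : 0 ≤ (u^2 - v^2)*(v^2*(u^2 + 2*v^2)) :=
        mul_nonneg (by linarith) (by positivity)
      nlinarith [hpos, t1, t2]
    have := mul_pos (show 0 < u^2 - v^2 by linarith) hbr
    linarith
  exact lt_of_pow_lt_pow_left₀ 2 (by positivity) hsq

lemma core_neg (R u v su sv : ℝ) (hR : 0 < R) (hu : 0 < u) (hv : 0 < v) (huv : u ≠ v)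
    (hsu : su = √(R^2 + u^2)) (hsv : sv = √(R^2 + v^2))
    (hbal : u * sv^3 = v * su^3) :
    (2*u^2 - R^2) * sv^5 + (2*v^2 - R^2) * su^5 < 0 := by
  have hsup : 0 < su := hsu ▸ Real.sqrt_pos.2 (by positivity)
  have hsvp : 0 < sv := hsv ▸ Real.sqrt_pos.2 (by positivity)
  have hsu2 : su^2 = R^2 + u^2 := by rw [hsu]; exact Real.sq_sqrt (by positivity)
  have hsv2 : sv^2 = R^2 + v^2 := by rw [hsv]; exact Real.sq_sqrt (by positivity)
  have huv2 : u^2 ≠ v^2 := by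
    rcases lt_or_gt_of_ne huv with h|h
    · intro he; nlinarith
    · intro he; nlinarith
  have hss : su^2 ≠ sv^2 := by rw [hsu2, hsv2]; intro he; exact huv2 (by linarith)
  have hssne : su ≠ sv := fun h => hss (by rw [h])
  have hbal2 : u^2 * sv^6 = v^2 * su^6 := by linear_combination (u*sv^3 + v*su^3) * hbal
  have hkey : (su^2 - sv^2) * (R^2*(su^4+su^2*sv^2+sv^4) - su^2*sv^2*(su^2+sv^2)) = 0 := by
    linear_combination hbal2 + sv^6 * hsu2 - su^6 * hsv2
  have hfact : R^2*(su^4+su^2*sv^2+sv^4) = su^2*sv^2*(su^2+sv^2) := by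
    rcases mul_eq_zero.1 hkey with h|h
    · exact absurd (by linarith : su^2 = sv^2) hss
    · linarith
  have hTD : ((2*u^2 - R^2) * sv^5 + (2*v^2 - R^2) * su^5) * (su^4+su^2*sv^2+sv^4)
      = -(su^2*sv^2*(su+sv)*(su-sv)^2*(su^4+su^3*sv+3*su^2*sv^2+su*sv^3+sv^4)) := by
    linear_combination (-3*(su^5+sv^5))*hfact + (-2*sv^5*(su^4+su^2*sv^2+sv^4))*hsu2
      + (-2*su^5*(su^4+su^2*sv^2+sv^4))*hsv2
  have hD : 0 < su^4+su^2*sv^2+sv^4 := by positivity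
  have hP : 0 < su^2*sv^2*(su+sv)*(su-sv)^2*(su^4+su^3*sv+3*su^2*sv^2+su*sv^3+sv^4) := by
    have h1 : 0 < (su-sv)^2 := by
      have : su - sv ≠ 0 := sub_ne_zero.2 hssne
      positivity
    have h2 : 0 < su^4+su^3*sv+3*su^2*sv^2+su*sv^3+sv^4 := by positivity
    have h3 : 0 < su + sv := by positivity
    positivity
  by_contra hcon
  push_neg at hcon
  nlinarith [mul_nonneg hcon hD.le]

/-! ### charges of the prism -/

def chg (N : ℕ) (R γ w : ℝ) (k : Fin N) : E3 :=
  pt (R * Real.cos (2 * π * k / N + γ)) (R * Real.sin (2 * π * k / N + γ)) w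

lemma rot_norm (β a b c : ℝ) :
    ‖pt (a * Real.cos β + b * Real.sin β) (-a * Real.sin β + b * Real.cos β) c‖
      = ‖pt a b c‖ := by
  rw [norm_pt, norm_pt]
  congr 1
  linear_combination (a^2 + b^2) * Real.sin_sq_add_cos_sq β

lemma Vprism_eq (N : ℕ) (R h β : ℝ) (x : E3) :
    Vprism N R h β x
      = ∑ k : Fin N, (‖x - chg N R 0 (-(h/2)) k‖⁻¹ + ‖x - chg N R β (h/2) k‖⁻¹) := by
  unfold Vprism V0
  rw [Finset.sum_add_distrib]
  congr 1
  · apply Finset.sum_congr rfl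
    intro k _
    rw [one_div]
    have hv : pt (x 0) (x 1) (x 2 + h / 2) - vert N R k = x - chg N R 0 (-(h/2)) k := by
      ext i
      rw [PiLp.sub_apply, PiLp.sub_apply]
      fin_cases i
      · show x 0 - R * Real.cos (2 * π * (k:ℕ) / N)
          = x 0 - R * Real.cos (2 * π * (k:ℕ) / N + 0)
        rw [add_zero]
      · show x 1 - R * Real.sin (2 * π * (k:ℕ) / N)
          = x 1 - R * Real.sin (2 * π * (k:ℕ) / N + 0)
        rw [add_zero]
      · show x 2 + h/2 - 0 = x 2 - -(h/2)
        ring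
    rw [hv]
  · apply Finset.sum_congr rfl
    intro k _
    rw [one_div]
    have h1 : pt (x 0 * Real.cos β + x 1 * Real.sin β)
          (-(x 0) * Real.sin β + x 1 * Real.cos β) (x 2 - h / 2) - vert N R k
        = pt ((x 0 - R * Real.cos (2 * π * (k:ℕ) / N + β)) * Real.cos β
              + (x 1 - R * Real.sin (2 * π * (k:ℕ) / N + β)) * Real.sin β)
            (-(x 0 - R * Real.cos (2 * π * (k:ℕ) / N + β)) * Real.sin β
              + (x 1 - R * Real.sin (2 * π * (k:ℕ) / N + β)) * Real.cos β)
            (x 2 - h/2) := by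
      ext i
      rw [PiLp.sub_apply]
      fin_cases i
      · show x 0 * Real.cos β + x 1 * Real.sin β - R * Real.cos (2 * π * (k:ℕ) / N)
          = (x 0 - R * Real.cos (2 * π * (k:ℕ) / N + β)) * Real.cos β
            + (x 1 - R * Real.sin (2 * π * (k:ℕ) / N + β)) * Real.sin β
        linear_combination (R*Real.cos β) * Real.cos_add (2 * π * (k:ℕ) / N) β
          + (R*Real.sin β) * Real.sin_add (2 * π * (k:ℕ) / N) β
          + (R*Real.cos (2 * π * (k:ℕ) / N)) * Real.sin_sq_add_cos_sq β
      · show -(x 0) * Real.sin β + x 1 * Real.cos β - R * Real.sin (2 * π * (k:ℕ) / N)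
          = -(x 0 - R * Real.cos (2 * π * (k:ℕ) / N + β)) * Real.sin β
            + (x 1 - R * Real.sin (2 * π * (k:ℕ) / N + β)) * Real.cos β
        linear_combination (-(R*Real.sin β)) * Real.cos_add (2 * π * (k:ℕ) / N) β
          + (R*Real.cos β) * Real.sin_add (2 * π * (k:ℕ) / N) β
          + (R*Real.sin (2 * π * (k:ℕ) / N)) * Real.sin_sq_add_cos_sq β
      · show x 2 - h/2 - 0 = x 2 - h/2
        ring
    have h2 : x - chg N R β (h/2) k
        = pt (x 0 - R * Real.cos (2 * π * (k:ℕ) / N + β))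
            (x 1 - R * Real.sin (2 * π * (k:ℕ) / N + β)) (x 2 - h/2) := by
      ext i
      rw [PiLp.sub_apply]
      fin_cases i <;> rfl
    rw [h1, rot_norm, h2]

/-! ### single-charge calculus -/

lemma hasFDerivAt_Q (c x : E3) :
    HasFDerivAt (fun y : E3 => (inner ℝ (y - c) (y - c) : ℝ))
      ((2:ℝ) • (innerSL ℝ (x - c) : E3 →L[ℝ] ℝ)) x := by
  have h1 : HasFDerivAt (fun y : E3 => y - c) (ContinuousLinearMap.id ℝ E3) x :=
    (hasFDerivAt_id x).sub_const c
  have h2 := h1.inner ℝ h1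
  refine h2.congr_fderiv ?_
  ext v
  simp only [ContinuousLinearMap.smul_apply, innerSL_apply_apply, fderivInnerCLM_apply,
    ContinuousLinearMap.coe_comp', Function.comp_apply, ContinuousLinearMap.prod_apply,
    ContinuousLinearMap.coe_id', id_eq, smul_eq_mul]
  rw [real_inner_comm (x - c) v]
  ring

def gradC (c : E3) : E3 → (E3 →L[ℝ] ℝ) :=
  fun x => (-(‖x - c‖ ^ 3)⁻¹) • (innerSL ℝ (x - c) : E3 →L[ℝ] ℝ)

def innerB : E3 →L[ℝ] E3 →L[ℝ] ℝ := innerSL ℝ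

@[simp] lemma innerB_apply (v u : E3) : innerB v u = inner ℝ v u := rfl

def hessC (c x : E3) : E3 →L[ℝ] E3 →L[ℝ] ℝ :=
  (-(‖x - c‖ ^ 3)⁻¹) • innerB +
  ((3 * (‖x - c‖ ^ 5)⁻¹) • (innerSL ℝ (x - c) : E3 →L[ℝ] ℝ)).smulRight (innerSL ℝ (x - c))

lemma gradC_apply (c x v : E3) :
    gradC c x v = -(‖x - c‖ ^ 3)⁻¹ * inner ℝ (x - c) v := by
  simp only [gradC, ContinuousLinearMap.smul_apply, innerSL_apply_apply, smul_eq_mul]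

lemma hessC_apply (c x v u : E3) :
    hessC c x v u = 3 * (‖x - c‖ ^ 5)⁻¹ * inner ℝ (x - c) v * inner ℝ (x - c) u
      - (‖x - c‖ ^ 3)⁻¹ * inner ℝ v u := by
  simp only [hessC, ContinuousLinearMap.smul_apply, ContinuousLinearMap.add_apply,
    ContinuousLinearMap.smulRight_apply, innerSL_apply_apply, innerB_apply, smul_eq_mul]
  ring

lemma hasFDerivAt_pot (c x : E3) (hx : x ≠ c) :
    HasFDerivAt (fun y : E3 => ‖y - c‖⁻¹) (gradC c x) x := by
  have hq : (0:ℝ) < inner ℝ (x - c) (x - c) := by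
    rw [real_inner_self_eq_norm_sq]
    have : 0 < ‖x - c‖ := norm_pos_iff.2 (sub_ne_zero.2 hx)
    positivity
  set q : ℝ := inner ℝ (x - c) (x - c) with hqdef
  have hsq : (0:ℝ) < √q := Real.sqrt_pos.2 hq
  have hφ : HasDerivAt (fun t : ℝ => (√t)⁻¹) (-(1 / (2 * √q)) / (√q)^2) q :=
    (Real.hasDerivAt_sqrt hq.ne').inv hsq.ne'
  have hcomp := hφ.comp_hasFDerivAt x (hasFDerivAt_Q c x)
  have heq : (fun y : E3 => ‖y - c‖⁻¹)
      = ((fun t : ℝ => (√t)⁻¹) ∘ fun y : E3 => (inner ℝ (y - c) (y - c) : ℝ)) := by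
    funext y
    show ‖y - c‖⁻¹ = (√(inner ℝ (y - c) (y - c)))⁻¹
    rw [norm_eq_sqrt_real_inner]
  rw [heq]
  unfold gradC
  refine hcomp.congr_fderiv ?_
  have hnorm : ‖x - c‖ = √q := norm_eq_sqrt_real_inner (x - c)
  ext v
  simp only [ContinuousLinearMap.smul_apply, innerSL_apply_apply, smul_eq_mul, hnorm]
  have h3 : (√q)^3 = q * √q := by rw [pow_succ, sq_sqrt hq.le]
  rw [h3]
  field_simp
  rw [sq_sqrt hq.le]
  ring

lemma hasFDerivAt_gradC (c x : E3) (hx : x ≠ c) :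
    HasFDerivAt (gradC c) (hessC c x) x := by
  have hq : (0:ℝ) < inner ℝ (x - c) (x - c) := by
    rw [real_inner_self_eq_norm_sq]
    have : 0 < ‖x - c‖ := norm_pos_iff.2 (sub_ne_zero.2 hx)
    positivity
  set q : ℝ := inner ℝ (x - c) (x - c) with hqdef
  have hsq : (0:ℝ) < √q := Real.sqrt_pos.2 hq
  have h1 : HasDerivAt (fun t : ℝ => t * √t) (1 * √q + q * (1 / (2 * √q))) q :=
    (hasDerivAt_id q).mul (Real.hasDerivAt_sqrt hq.ne')
  have h2 : HasDerivAt (fun t : ℝ => -((t * √t)⁻¹))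
      (-(-(1 * √q + q * (1 / (2 * √q))) / (q * √q)^2)) q :=
    (h1.inv (by positivity)).neg
  have hσ := h2.comp_hasFDerivAt x (hasFDerivAt_Q c x)
  have hlin : HasFDerivAt (fun y : E3 => (innerSL ℝ (y - c) : E3 →L[ℝ] ℝ))
      innerB x := by
    have hb := innerB.hasFDerivAt (x := x - c)
    have hc := hb.comp x ((hasFDerivAt_id x).sub_const c)
    rw [ContinuousLinearMap.comp_id] at hc
    exact hc
  have hprod := hσ.smul hlin
  have hfun : gradC c = fun y : E3 =>
      (((fun t : ℝ => -((t * √t)⁻¹)) ∘ fun y : E3 => (inner ℝ (y - c) (y - c) : ℝ)) y)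
        • (innerSL ℝ (y - c) : E3 →L[ℝ] ℝ) := by
    funext y
    unfold gradC
    congr 1
    have hqy : (0:ℝ) ≤ inner ℝ (y - c) (y - c) := real_inner_self_nonneg
    simp only [Function.comp_apply]
    rw [norm_eq_sqrt_real_inner, pow_succ, sq_sqrt hqy]
  rw [hfun]
  refine hprod.congr_fderiv ?_
  ext v u
  have hnorm : ‖x - c‖ = √q := norm_eq_sqrt_real_inner (x - c)
  simp only [hessC, ContinuousLinearMap.add_apply, ContinuousLinearMap.smul_apply,
    ContinuousLinearMap.smulRight_apply, innerSL_apply_apply, innerB_apply, smul_eq_mul,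
    Function.comp_apply, ContinuousLinearMap.coe_smul', Pi.smul_apply, hnorm]
  rw [← hqdef]
  set s : ℝ := √q with hsdef
  have hq2 : q = s^2 := by rw [hsdef]; exact (sq_sqrt hq.le).symm
  have hsne : s ≠ 0 := by rw [hsdef]; exact hsq.ne'
  rw [hq2]
  field_simp
  ring

/-! ### the potential near the axis -/

lemma axis_ne_chg (R : ℝ) (hR : 0 < R) (z γ w : ℝ) (k : Fin N) :
    pt 0 0 z ≠ chg N R γ w k := by
  intro he
  have h0 : (pt 0 0 z) 0 = (chg N R γ w k) 0 := by rw [he]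
  have h1 : (pt 0 0 z) 1 = (chg N R γ w k) 1 := by rw [he]
  have hc : R * Real.cos (2 * π * k / N + γ) = 0 := by
    simpa [chg] using h0.symm
  have hs : R * Real.sin (2 * π * k / N + γ) = 0 := by
    simpa [chg] using h1.symm
  have hcc : Real.cos (2 * π * k / N + γ) = 0 := by
    rcases mul_eq_zero.1 hc with h|h
    · exact absurd h hR.ne'
    · exact h
  have hss : Real.sin (2 * π * k / N + γ) = 0 := by
    rcases mul_eq_zero.1 hs with h|h
    · exact absurd h hR.ne'
    · exact h
  have := Real.sin_sq_add_cos_sq (2 * π * k / N + γ)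
  rw [hcc, hss] at this
  norm_num at this

lemma sub_chg (R z γ w : ℝ) (k : Fin N) :
    pt 0 0 z - chg N R γ w k
      = pt (-(R * Real.cos (2 * π * k / N + γ))) (-(R * Real.sin (2 * π * k / N + γ))) (z - w) := by
  ext i
  rw [PiLp.sub_apply]
  fin_cases i
  · show (0:ℝ) - R * Real.cos (2 * π * (k:ℕ) / N + γ) = -(R * Real.cos (2 * π * (k:ℕ) / N + γ))
    ring
  · show (0:ℝ) - R * Real.sin (2 * π * (k:ℕ) / N + γ) = -(R * Real.sin (2 * π * (k:ℕ) / N + γ))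
    ring
  · show z - w = z - w
    rfl

lemma norm_chg (R z γ w : ℝ) (k : Fin N) :
    ‖pt 0 0 z - chg N R γ w k‖ = √(R^2 + (z - w)^2) := by
  rw [sub_chg, norm_pt]
  congr 1
  linear_combination R^2 * Real.sin_sq_add_cos_sq (2 * π * k / N + γ)

lemma inner_sub_chg (R z γ w : ℝ) (k : Fin N) (v : E3) :
    (inner ℝ (pt 0 0 z - chg N R γ w k) v : ℝ)
      = -(R * Real.cos (2 * π * k / N + γ)) * v 0
        + -(R * Real.sin (2 * π * k / N + γ)) * v 1 + (z - w) * v 2 := by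
  rw [sub_chg, inner_pt]

lemma hasFDerivAt_Vprism (N : ℕ) (R h β : ℝ) (x : E3)
    (hx : ∀ k : Fin N, x ≠ chg N R 0 (-(h/2)) k ∧ x ≠ chg N R β (h/2) k) :
    HasFDerivAt (Vprism N R h β)
      (∑ k : Fin N, (gradC (chg N R 0 (-(h/2)) k) x + gradC (chg N R β (h/2) k) x)) x := by
  have hfun : Vprism N R h β = fun y => ∑ k : Fin N,
      (‖y - chg N R 0 (-(h/2)) k‖⁻¹ + ‖y - chg N R β (h/2) k‖⁻¹) :=
    funext (Vprism_eq N R h β)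
  rw [hfun]
  apply HasFDerivAt.fun_sum
  intro k _
  exact (hasFDerivAt_pot _ x (hx k).1).add (hasFDerivAt_pot _ x (hx k).2)

lemma hess_Vprism (N : ℕ) (R h β : ℝ) (x₀ : E3)
    (hx : ∀ k : Fin N, x₀ ≠ chg N R 0 (-(h/2)) k ∧ x₀ ≠ chg N R β (h/2) k) :
    fderiv ℝ (fderiv ℝ (Vprism N R h β)) x₀
      = ∑ k : Fin N, (hessC (chg N R 0 (-(h/2)) k) x₀ + hessC (chg N R β (h/2) k) x₀) := by
  have hSopen : IsOpen {x : E3 | ∀ k : Fin N, x ≠ chg N R 0 (-(h/2)) k ∧ x ≠ chg N R β (h/2) k} := by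
    have hEq : {x : E3 | ∀ k : Fin N, x ≠ chg N R 0 (-(h/2)) k ∧ x ≠ chg N R β (h/2) k}
        = ⋂ k : Fin N, (({chg N R 0 (-(h/2)) k}ᶜ : Set E3) ∩ ({chg N R β (h/2) k}ᶜ : Set E3)) := by
      ext y
      simp [Set.mem_iInter, Set.mem_compl_iff]
    rw [hEq]
    exact isOpen_iInter_of_finite fun k =>
      IsOpen.inter isOpen_compl_singleton isOpen_compl_singleton
  have hmem : {x : E3 | ∀ k : Fin N, x ≠ chg N R 0 (-(h/2)) k ∧ x ≠ chg N R β (h/2) k}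
      ∈ nhds x₀ := hSopen.mem_nhds hx
  have hev : fderiv ℝ (Vprism N R h β) =ᶠ[nhds x₀]
      (fun x => ∑ k : Fin N, (gradC (chg N R 0 (-(h/2)) k) x + gradC (chg N R β (h/2) k) x)) :=
    Filter.eventuallyEq_of_mem hmem (fun y hy => (hasFDerivAt_Vprism N R h β y hy).fderiv)
  rw [hev.fderiv_eq]
  exact (HasFDerivAt.fun_sum fun k _ =>
    (hasFDerivAt_gradC _ x₀ (hx k).1).add (hasFDerivAt_gradC _ x₀ (hx k).2)).fderiv

lemma ring_grad (hN : 3 ≤ N) (R γ w z : ℝ) (v : E3) :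
    ∑ k : Fin N, -(‖pt 0 0 z - chg N R γ w k‖^3)⁻¹ * inner ℝ (pt 0 0 z - chg N R γ w k) v
    = -(((√(R^2+(z-w)^2))^3)⁻¹) * (N * ((z-w) * v 2)) := by
  have hterm : ∀ k ∈ (univ : Finset (Fin N)),
      -(‖pt 0 0 z - chg N R γ w k‖^3)⁻¹ * inner ℝ (pt 0 0 z - chg N R γ w k) v
      = (-(((√(R^2+(z-w)^2))^3)⁻¹)) * (-(R * Real.cos (2 * π * k / N + γ)) * v 0
        + -(R * Real.sin (2 * π * k / N + γ)) * v 1 + (z - w) * v 2) := by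
    intro k _
    rw [norm_chg, inner_sub_chg]
  rw [Finset.sum_congr rfl hterm, ← Finset.mul_sum, ring_sum_lin hN R γ (z-w) (v 0) (v 1) (v 2)]

lemma ring_hess (hN : 3 ≤ N) (R γ w z : ℝ) (v u : E3) :
    ∑ k : Fin N, (3 * (‖pt 0 0 z - chg N R γ w k‖^5)⁻¹ * inner ℝ (pt 0 0 z - chg N R γ w k) v
        * inner ℝ (pt 0 0 z - chg N R γ w k) u
      - (‖pt 0 0 z - chg N R γ w k‖^3)⁻¹ * inner ℝ v u)
    = (3 * ((√(R^2+(z-w)^2))^5)⁻¹) * ((N:ℝ) * (R^2/2) * (v 0 * u 0 + v 1 * u 1)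
        + N * ((z-w)^2 * (v 2 * u 2)))
      - N * (((√(R^2+(z-w)^2))^3)⁻¹ * (v 0 * u 0 + v 1 * u 1 + v 2 * u 2)) := by
  have hterm : ∀ k ∈ (univ : Finset (Fin N)),
      (3 * (‖pt 0 0 z - chg N R γ w k‖^5)⁻¹ * inner ℝ (pt 0 0 z - chg N R γ w k) v
        * inner ℝ (pt 0 0 z - chg N R γ w k) u
      - (‖pt 0 0 z - chg N R γ w k‖^3)⁻¹ * inner ℝ v u)
      = (3 * ((√(R^2+(z-w)^2))^5)⁻¹)
          * ((-(R * Real.cos (2 * π * k / N + γ)) * v 0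
            + -(R * Real.sin (2 * π * k / N + γ)) * v 1 + (z - w) * v 2)
          * (-(R * Real.cos (2 * π * k / N + γ)) * u 0
            + -(R * Real.sin (2 * π * k / N + γ)) * u 1 + (z - w) * u 2))
        - ((√(R^2+(z-w)^2))^3)⁻¹ * (v 0 * u 0 + v 1 * u 1 + v 2 * u 2) := by
    intro k _
    rw [norm_chg, inner_sub_chg, inner_sub_chg, inner_coords]
    ring
  rw [Finset.sum_congr rfl hterm, Finset.sum_sub_distrib, ← Finset.mul_sum,
    ring_sum_bil hN R γ (z-w) (v 0) (v 1) (v 2) (u 0) (u 1) (u 2),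
    Finset.sum_const, Finset.card_univ, Fintype.card_fin, nsmul_eq_mul]

def Acoef (N : ℕ) (R h z : ℝ) : ℝ :=
  N * (3 * (R^2/2) * ((√(R^2 + (z + h/2)^2))^5)⁻¹ - ((√(R^2 + (z + h/2)^2))^3)⁻¹)
  + N * (3 * (R^2/2) * ((√(R^2 + (z - h/2)^2))^5)⁻¹ - ((√(R^2 + (z - h/2)^2))^3)⁻¹)

def Ccoef (N : ℕ) (R h z : ℝ) : ℝ :=
  N * (3 * (z + h/2)^2 * ((√(R^2 + (z + h/2)^2))^5)⁻¹ - ((√(R^2 + (z + h/2)^2))^3)⁻¹)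
  + N * (3 * (z - h/2)^2 * ((√(R^2 + (z - h/2)^2))^5)⁻¹ - ((√(R^2 + (z - h/2)^2))^3)⁻¹)

lemma fderiv_Vprism_zero (N : ℕ) (R h β : ℝ) (hN : 3 ≤ N) (hR : 0 < R) (z : ℝ)
    (hG : G R h z = 0) :
    fderiv ℝ (Vprism N R h β) (pt 0 0 z) = 0 := by
  rw [(hasFDerivAt_Vprism N R h β (pt 0 0 z)
    (fun k => ⟨axis_ne_chg R hR z 0 (-(h/2)) k, axis_ne_chg R hR z β (h/2) k⟩)).fderiv]
  ext v
  simp only [ContinuousLinearMap.sum_apply, ContinuousLinearMap.add_apply, gradC_apply,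
    ContinuousLinearMap.zero_apply]
  rw [Finset.sum_add_distrib, ring_grad hN R 0 (-(h/2)) z v, ring_grad hN R β (h/2) z v]
  rw [show R^2 + (z - -(h/2))^2 = R^2 + (z + h/2)^2 from by ring]
  have hG' := hG
  unfold G at hG'
  linear_combination (-((N:ℝ) * v 2)) * hG'

lemma hess_Vprism_eval (N : ℕ) (R h β : ℝ) (hN : 3 ≤ N) (hR : 0 < R) (z : ℝ) (v u : E3) :
    hess (Vprism N R h β) (pt 0 0 z) v u
      = Acoef N R h z * (v 0 * u 0 + v 1 * u 1) + Ccoef N R h z * (v 2 * u 2) := by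
  unfold hess
  rw [hess_Vprism N R h β (pt 0 0 z)
    (fun k => ⟨axis_ne_chg R hR z 0 (-(h/2)) k, axis_ne_chg R hR z β (h/2) k⟩)]
  simp only [ContinuousLinearMap.sum_apply, ContinuousLinearMap.add_apply, hessC_apply]
  rw [Finset.sum_add_distrib, ring_hess hN R 0 (-(h/2)) z v u, ring_hess hN R β (h/2) z v u]
  rw [show R^2 + (z - -(h/2))^2 = R^2 + (z + h/2)^2 from by ring]
  unfold Acoef Ccoef
  ring

/-! ### signs of the Hessian coefficients -/

lemma inv_pow3_eq (s : ℝ) (hs : 0 < s) : (s^3)⁻¹ = s^2 * (s^5)⁻¹ := by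
  rw [show s^5 = s^2*s^3 from by ring, mul_inv, ← mul_assoc,
    mul_inv_cancel₀ (pow_ne_zero 2 hs.ne'), one_mul]

lemma Acoef_eq (N : ℕ) (R h z : ℝ) (hR : 0 < R) :
    Acoef N R h z = -Ccoef N R h z / 2 := by
  have hPpos : 0 < √(R^2 + (z + h/2)^2) := Real.sqrt_pos.2 (by positivity)
  have hMpos : 0 < √(R^2 + (z - h/2)^2) := Real.sqrt_pos.2 (by positivity)
  have hsP2 : (√(R^2 + (z + h/2)^2))^2 = R^2 + (z + h/2)^2 := Real.sq_sqrt (by positivity)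
  have hsM2 : (√(R^2 + (z - h/2)^2))^2 = R^2 + (z - h/2)^2 := Real.sq_sqrt (by positivity)
  have e3P := inv_pow3_eq _ hPpos
  have e3M := inv_pow3_eq _ hMpos
  unfold Acoef Ccoef
  rw [e3P, e3M, hsP2, hsM2]
  ring

lemma Ccoef_neg (N : ℕ) (R h z : ℝ) (hN : 3 ≤ N) (hR : 0 < R)
    (hz1 : -(h/2) < z) (hz2 : z < h/2) (hz0 : z ≠ 0) (hG : G R h z = 0) :
    Ccoef N R h z < 0 := by
  have hu : 0 < z + h/2 := by linarith
  have hv : 0 < h/2 - z := by linarith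
  have huv : z + h/2 ≠ h/2 - z := by
    intro hcon
    apply hz0
    linarith
  set sP := √(R^2 + (z + h/2)^2) with hsPdef
  set sM := √(R^2 + (z - h/2)^2) with hsMdef
  have hPpos : 0 < sP := Real.sqrt_pos.2 (by positivity)
  have hMpos : 0 < sM := Real.sqrt_pos.2 (by positivity)
  have hsP2 : sP^2 = R^2 + (z + h/2)^2 := Real.sq_sqrt (by positivity)
  have hsM2 : sM^2 = R^2 + (z - h/2)^2 := Real.sq_sqrt (by positivity)
  have hsv : sM = √(R^2 + (h/2 - z)^2) := by
    rw [hsMdef]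
    congr 1
    ring
  have hbal : (z + h/2) * sM^3 = (h/2 - z) * sP^3 := by
    have h1 : G R h z * (sP^3 * sM^3) = (z + h/2) * sM^3 - (h/2 - z) * sP^3 := by
      unfold G
      rw [← hsPdef, ← hsMdef]
      field_simp
      ring
    rw [hG, zero_mul] at h1
    linarith
  have hcore := core_neg R (z + h/2) (h/2 - z) sP sM hR hu hv huv hsPdef hsv hbal
  have hNpos : (0:ℝ) < N := by
    have : 0 < N := by omega
    exact_mod_cast this
  have e3P := inv_pow3_eq sP hPpos
  have e3M := inv_pow3_eq sM hMpos
  have hCeq : Ccoef N R h z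
      = N * (((2*(z + h/2)^2 - R^2) * sM^5 + (2*(h/2 - z)^2 - R^2) * sP^5) / (sP^5 * sM^5)) := by
    unfold Ccoef
    rw [← hsPdef, ← hsMdef, e3P, e3M, hsP2, hsM2]
    field_simp
    ring
  rw [hCeq]
  apply mul_neg_of_pos_of_neg hNpos
  exact div_neg_of_neg_of_pos hcore (by positivity)

/-! ### Morse data from the diagonal Hessian -/

lemma e3_ne_zero : pt 0 0 1 ≠ 0 := by
  intro h
  have : (pt 0 0 1) 2 = (0 : E3) 2 := by rw [h]
  simp at this

lemma index_one (f : E3 → ℝ) (x : E3) (A C : ℝ) (hA : 0 < A) (hC : C < 0)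
    (hf : ∀ v u : E3, hess f x v u = A * (v 0 * u 0 + v 1 * u 1) + C * (v 2 * u 2)) :
    Nondeg f x ∧ morseIndex f x = 1 := by
  constructor
  · intro v hv
    intro hzero
    have hv0 : v 0 = 0 := by
      have h := hf v (pt 1 0 0)
      rw [hzero] at h
      simp at h
      rcases h with h|h
      · exact absurd h hA.ne'
      · exact h
    have hv1 : v 1 = 0 := by
      have h := hf v (pt 0 1 0)
      rw [hzero] at h
      simp at h
      rcases h with h|h
      · exact absurd h hA.ne'
      · exact h
    have hv2 : v 2 = 0 := by
      have h := hf v (pt 0 0 1)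
      rw [hzero] at h
      simp at h
      rcases h with h|h
      · exact absurd h hC.ne
      · exact h
    apply hv
    ext i
    fin_cases i <;> simpa
  · have hset : {k : ℕ | ∃ W : Submodule ℝ E3, Module.finrank ℝ ↥W = k ∧
        ∀ v ∈ W, v ≠ 0 → hess f x v v < 0} = Set.Iic 1 := by
      ext k
      constructor
      · rintro ⟨W, hrank, hneg⟩
        by_contra hk
        simp only [Set.mem_Iic, not_le] at hk
        have hk2 : 2 ≤ Module.finrank ℝ ↥W := by omega
        set ψ : E3 →L[ℝ] ℝ := innerSL ℝ (pt 0 0 1) with hψ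
        set P : Submodule ℝ E3 := LinearMap.ker (ψ : E3 →ₗ[ℝ] ℝ) with hP
        have hker : Module.finrank ℝ ↥P = 2 := by
          have hr : LinearMap.range (ψ : E3 →ₗ[ℝ] ℝ) = ⊤ := by
            rw [LinearMap.range_eq_top]
            intro t
            refine ⟨t • pt 0 0 1, ?_⟩
            show ψ (t • pt 0 0 1) = t
            simp [ψ, real_inner_smul_right, PiLp.inner_apply, Fin.sum_univ_three,
              RCLike.inner_apply, norm_pt]
          have hsum2 := LinearMap.finrank_range_add_finrank_ker (ψ : E3 →ₗ[ℝ] ℝ)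
          rw [hr, finrank_top, Module.finrank_self, finrank_euclideanSpace_fin] at hsum2
          rw [← hP] at hsum2
          omega
        have hsum := Submodule.finrank_sup_add_finrank_inf_eq W P
        have hle : Module.finrank ℝ ↥(W ⊔ P) ≤ 3 := by
          exact (Submodule.finrank_le _).trans (le_of_eq finrank_euclideanSpace_fin)
        have hpos : 0 < Module.finrank ℝ ↥(W ⊓ P) := by omega
        have hne : W ⊓ P ≠ ⊥ := by
          intro hbot
          rw [hbot] at hpos
          simp [finrank_bot] at hpos
        obtain ⟨v, hvmem, hvne⟩ := Submodule.ne_bot_iff _ |>.1 hne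
        have hv2 : v 2 = 0 := by
          have hmem2 := hvmem.2
          have hker2 := LinearMap.mem_ker.1 hmem2
          have hip : (inner ℝ (pt 0 0 1) v : ℝ) = v 2 := by
            rw [PiLp.inner_apply, Fin.sum_univ_three]
            simp [RCLike.inner_apply]
          rw [← hip]
          simpa [ψ] using hker2
        have hlt := hneg v hvmem.1 hvne
        rw [hf v v, hv2] at hlt
        nlinarith [sq_nonneg (v 0), sq_nonneg (v 1)]
      · intro hk
        simp only [Set.mem_Iic] at hk
        interval_cases k
        · exact ⟨⊥, finrank_bot ℝ E3, fun v hv hvne => absurd ((Submodule.mem_bot ℝ).1 hv) hvne⟩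
        · refine ⟨Submodule.span ℝ {pt 0 0 1}, finrank_span_singleton e3_ne_zero, ?_⟩
          intro v hv hvne
          obtain ⟨t, rfl⟩ := Submodule.mem_span_singleton.1 hv
          have ht : t ≠ 0 := by
            intro hcon; apply hvne; rw [hcon, zero_smul]
          rw [hf]
          have h0 : (t • pt 0 0 1) 0 = 0 := by simp
          have h1 : (t • pt 0 0 1) 1 = 0 := by simp
          have h2 : (t • pt 0 0 1) 2 = t := by simp
          rw [h0, h1, h2]
          have heq : A * (0*0 + 0*0) + C * (t*t) = C * (t*t) := by ring
          rw [heq]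
          exact mul_neg_of_neg_of_pos hC (mul_self_pos.2 ht)
    rw [morseIndex, hset, csSup_Iic]

/-! ### existence of the critical point -/

lemma G_odd (R h z : ℝ) : G R h (-z) = -G R h z := by
  unfold G
  rw [show R^2 + (-z + h/2)^2 = R^2 + (z - h/2)^2 from by ring,
    show R^2 + (-z - h/2)^2 = R^2 + (z + h/2)^2 from by ring]
  ring

lemma exists_zp (R h : ℝ) (hR : 0 < R) (hh : √2 * R < h) :
    ∃ z, 0 < z ∧ z < h/2 ∧ G R h z = 0 := by
  have h2p : (0:ℝ) < √2 := Real.sqrt_pos.2 (by norm_num)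
  have hs2 : √2 * √2 = 2 := Real.mul_self_sqrt (by norm_num)
  have hh0 : 0 < h := lt_trans (by positivity) hh
  set z₁ := (h - √2*R)/4 with hz₁
  have hz₁pos : 0 < z₁ := div_pos (by linarith) (by norm_num)
  have hz₁lt : z₁ < h/2 := by
    rw [hz₁]
    nlinarith [mul_pos h2p hR]
  have hub : R / √2 ≤ h/2 - z₁ := by
    rw [div_le_iff₀ h2p, hz₁]
    nlinarith [mul_pos h2p hR]
  have hlt : h/2 - z₁ < z₁ + h/2 := by linarith
  have hneg : G R h z₁ < 0 := by
    have key := phi_lt R hR hub hlt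
    unfold G
    rw [show R^2 + (z₁ - h/2)^2 = R^2 + (h/2 - z₁)^2 from by ring]
    have e2 : (z₁ - h/2) * ((√(R^2 + (h/2 - z₁)^2))^3)⁻¹
        = -((h/2 - z₁) * ((√(R^2 + (h/2 - z₁)^2))^3)⁻¹) := by ring
    rw [e2]
    linarith [key]
  have hpos : 0 < G R h (h/2) := by
    unfold G
    rw [show h/2 + h/2 = h from by ring, show h/2 - h/2 = (0:ℝ) from by ring, zero_mul, add_zero]
    have hs : 0 < √(R^2 + h^2) := Real.sqrt_pos.2 (by positivity)
    exact mul_pos hh0 (inv_pos.2 (pow_pos hs 3))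
  have hIoo := intermediate_value_Ioo hz₁lt.le ((continuous_G R h hR).continuousOn)
  have h0mem : (0:ℝ) ∈ Set.Ioo (G R h z₁) (G R h (h/2)) := ⟨hneg, hpos⟩
  obtain ⟨z, hzmem, hzval⟩ := hIoo h0mem
  exact ⟨z, hz₁pos.trans hzmem.1, hzmem.2, hzval⟩

/-- if `h > √2 R`, then besides the origin there are two further
critical points of the potential of the `β`-rotated prism on the `x₃`-axis, one with
`z ∈ (0, h/2)` and one with `z ∈ (-h/2, 0)`, and both are 1-saddles. -/
theorem stmt11 (N : ℕ) (hN : 3 ≤ N) (β R h : ℝ) (hR : 0 < R)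
    (hh : Real.sqrt 2 * R < h) :
    ∃ zp ∈ Set.Ioo (0 : ℝ) (h / 2), ∃ zm ∈ Set.Ioo (-(h / 2)) (0 : ℝ),
      fderiv ℝ (Vprism N R h β) (pt 0 0 zp) = 0 ∧
      Nondeg (Vprism N R h β) (pt 0 0 zp) ∧
      morseIndex (Vprism N R h β) (pt 0 0 zp) = 1 ∧
      fderiv ℝ (Vprism N R h β) (pt 0 0 zm) = 0 ∧
      Nondeg (Vprism N R h β) (pt 0 0 zm) ∧
      morseIndex (Vprism N R h β) (pt 0 0 zm) = 1 := by
  obtain ⟨zp, hzp0, hzph, hGzp⟩ := exists_zp R h hR hh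
  have hGzm : G R h (-zp) = 0 := by rw [G_odd, hGzp, neg_zero]
  have hCp : Ccoef N R h zp < 0 :=
    Ccoef_neg N R h zp hN hR (by linarith) hzph hzp0.ne' hGzp
  have hCm : Ccoef N R h (-zp) < 0 :=
    Ccoef_neg N R h (-zp) hN hR (by linarith) (by linarith) (neg_ne_zero.2 hzp0.ne') hGzm
  have hAp : 0 < Acoef N R h zp := by
    rw [Acoef_eq N R h zp hR]; linarith
  have hAm : 0 < Acoef N R h (-zp) := by
    rw [Acoef_eq N R h (-zp) hR]; linarith
  obtain ⟨hndp, hmip⟩ := index_one (Vprism N R h β) (pt 0 0 zp) _ _ hAp hCp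
    (hess_Vprism_eval N R h β hN hR zp)
  obtain ⟨hndm, hmim⟩ := index_one (Vprism N R h β) (pt 0 0 (-zp)) _ _ hAm hCm
    (hess_Vprism_eval N R h β hN hR (-zp))
  exact ⟨zp, ⟨hzp0, hzph⟩, -zp, ⟨by linarith, by linarith⟩,
    fderiv_Vprism_zero N R h β hN hR zp hGzp, hndp, hmip,
    fderiv_Vprism_zero N R h β hN hR (-zp) hGzm, hndm, hmim⟩
end
end

section
/- Let A_1, …, A_n be distinct points in ℝ³ with charges ζ_1, …, ζ_n > 0, let p ≥ 1 be a real number, and let V_p(x) = Σ_{i=1}^n (ζ_i/‖x − A_i‖)^p on ℝ³ ∖ {A_1, …, A_n}. Then V_p has no local maximum: no point x of the domain admits a neighbourhood U with V_p(y) ≤ V_p(x) for all y ∈ U. -/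
noncomputable section

open Finset
open Metric Real MeasureTheory Set

lemma analyticAt_sqrt {x : ℝ} (hx : 0 < x) : AnalyticAt ℝ Real.sqrt x := by
  have hC : AnalyticAt ℂ (fun z : ℂ => Complex.exp (Complex.log z / 2)) (x : ℂ) := by
    have hm : (x : ℂ) ∈ Complex.slitPlane := by
      simp [Complex.mem_slitPlane_iff, hx]
    exact ((analyticAt_clog hm).div analyticAt_const (by norm_num)).cexp
  have hR : AnalyticAt ℝ
      (fun t : ℝ => Complex.reCLM ((fun z : ℂ => Complex.exp (Complex.log z / 2))
        (Complex.ofRealCLM t))) x := by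
    exact (Complex.reCLM.analyticAt _).comp ((hC.restrictScalars).comp (Complex.ofRealCLM.analyticAt x))
  refine hR.congr ?_
  have : ∀ᶠ t : ℝ in nhds x, 0 < t := eventually_gt_nhds hx
  filter_upwards [this] with t ht
  have h1 : Complex.log (Complex.ofRealCLM t) = (Real.log t : ℂ) := by
    simp [Complex.ofReal_log ht.le]
  simp only [h1]
  have : ((Real.log t : ℂ) / 2) = ((Real.log t / 2 : ℝ) : ℂ) := by push_cast; ring
  rw [this, ← Complex.ofReal_exp]
  simp only [Complex.reCLM_apply, Complex.ofReal_re]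
  rw [Real.sqrt_eq_rpow, Real.rpow_def_of_pos ht]
  ring_nf

lemma analyticAt_inv_norm (A : E3) {y : E3} (h : y ≠ A) :
    AnalyticAt ℝ (fun z : E3 => ‖z - A‖⁻¹) y := by
  have hq : AnalyticAt ℝ (fun z : E3 => ∑ k : Fin 3, (z k - A k) ^ 2) y := by
    apply Finset.analyticAt_fun_sum
    intro k _
    have h1 : AnalyticAt ℝ (fun z : E3 => z k - A k) y :=
      ((EuclideanSpace.proj (𝕜 := ℝ) k).analyticAt y).sub analyticAt_const
    simpa [sq] using h1.fun_mul h1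
  have hpos : 0 < ∑ k : Fin 3, (y k - A k) ^ 2 := by
    have h0 : y - A ≠ 0 := sub_ne_zero.mpr h
    have : 0 < ‖y - A‖ := norm_pos_iff.mpr h0
    have hn : ‖y - A‖ = Real.sqrt (∑ k : Fin 3, (y k - A k) ^ 2) := by
      rw [EuclideanSpace.norm_eq]
      congr 1
      refine Finset.sum_congr rfl fun k _ => ?_
      simp [PiLp.sub_apply, Real.norm_eq_abs, sq_abs]
    nlinarith [Real.sq_sqrt (by positivity : (0:ℝ) ≤ ∑ k : Fin 3, (y k - A k) ^ 2),
      Real.sqrt_nonneg (∑ k : Fin 3, (y k - A k) ^ 2)]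
  have hnorm : AnalyticAt ℝ (fun z : E3 => ‖z - A‖) y := by
    have hcomp : AnalyticAt ℝ (fun z : E3 => Real.sqrt (∑ k : Fin 3, (z k - A k) ^ 2)) y :=
      AnalyticAt.comp (g := Real.sqrt) (f := fun z : E3 => ∑ k : Fin 3, (z k - A k) ^ 2)
        (analyticAt_sqrt hpos) hq
    refine hcomp.congr ?_
    filter_upwards with z
    rw [EuclideanSpace.norm_eq]
    congr 1
    refine Finset.sum_congr rfl fun k _ => ?_
    simp [PiLp.sub_apply, Real.norm_eq_abs, sq_abs]
  exact hnorm.inv (by simp [sub_ne_zero.mpr h])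



lemma uIcc_nonneg {Q v : ℝ} (hQ : 0 ≤ Q) (hv : v ∈ Set.uIcc (0:ℝ) Q) : 0 ≤ v := by
  rw [Set.uIcc_of_le hQ] at hv
  exact hv.1

/-- ∫_0^Q (√(v+a²))⁻¹ dv = 2√(Q+a²) − 2a -/
lemma integral_inv_sqrt_add {a Q : ℝ} (ha : 0 < a) (hQ : 0 ≤ Q) :
    ∫ v in (0:ℝ)..Q, (Real.sqrt (v + a ^ 2))⁻¹ = 2 * Real.sqrt (Q + a ^ 2) - 2 * a := by
  have key : ∀ v ∈ Set.uIcc (0:ℝ) Q, HasDerivAt (fun v => 2 * Real.sqrt (v + a ^ 2))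
      ((Real.sqrt (v + a ^ 2))⁻¹) v := by
    intro v hv
    have hpos : 0 < v + a ^ 2 := by have := uIcc_nonneg hQ hv; positivity
    have h1 : HasDerivAt (fun v : ℝ => v + a ^ 2) 1 v := by
      simpa using (hasDerivAt_id v).add_const (a ^ 2)
    have h2 := (Real.hasDerivAt_sqrt hpos.ne').comp v h1
    have h3 := h2.const_mul (2:ℝ)
    refine h3.congr_deriv ?_
    have hs : 0 < Real.sqrt (v + a ^ 2) := Real.sqrt_pos.mpr hpos
    field_simp
  have hcont : ContinuousOn (fun v => (Real.sqrt (v + a ^ 2))⁻¹) (Set.uIcc 0 Q) := by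
    apply ContinuousOn.inv₀
    · exact (Real.continuous_sqrt.comp (by continuity)).continuousOn
    · intro v hv
      have hpos : 0 < v + a ^ 2 := by have := uIcc_nonneg hQ hv; positivity
      exact (Real.sqrt_pos.mpr hpos).ne'
  rw [intervalIntegral.integral_eq_sub_of_hasDerivAt key hcont.intervalIntegrable]
  rw [zero_add, Real.sqrt_sq ha.le]

/-- outer integral, general form :
    ∫_{-s}^{s} (2√(s²+d²−2dt) − 2(d−t)) dt = 4s³/(3d) -/
lemma integral_outer {s d : ℝ} (hs : 0 < s) (hsd : s < d) :
    ∫ t in (-s)..s, (2 * Real.sqrt (s ^ 2 + d ^ 2 - 2 * d * t) - 2 * (d - t))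
      = 4 * s ^ 3 / (3 * d) := by
  have hd : 0 < d := hs.trans hsd
  have key : ∀ t ∈ Set.uIcc (-s) s,
      HasDerivAt (fun t => -(2 / (3 * d)) * ((s ^ 2 + d ^ 2 - 2 * d * t) *
          Real.sqrt (s ^ 2 + d ^ 2 - 2 * d * t)) - (2 * d * t - t ^ 2))
        (2 * Real.sqrt (s ^ 2 + d ^ 2 - 2 * d * t) - 2 * (d - t)) t := by
    intro t ht
    rw [Set.uIcc_of_le (by linarith)] at ht
    have hc : 0 < s ^ 2 + d ^ 2 - 2 * d * t := by nlinarith [ht.1, ht.2]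
    have h1 : HasDerivAt (fun t : ℝ => s ^ 2 + d ^ 2 - 2 * d * t) (-(2 * d)) t := by
      simpa using ((hasDerivAt_id t).const_mul (2 * d)).const_sub (s ^ 2 + d ^ 2)
    have h2 := (Real.hasDerivAt_sqrt hc.ne').comp t h1
    have h3 := (h1.mul h2).const_mul (-(2 / (3 * d)))
    have h4 : HasDerivAt (fun t : ℝ => 2 * d * t - t ^ 2) (2 * d - 2 * t) t := by
      simpa using ((hasDerivAt_id t).const_mul (2 * d)).fun_sub
        (((hasDerivAt_id t).fun_pow 2))
    have h5 := h3.sub h4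
    refine h5.congr_deriv ?_
    have hs0 : 0 < Real.sqrt (s ^ 2 + d ^ 2 - 2 * d * t) := Real.sqrt_pos.mpr hc
    have hsq : Real.sqrt (s ^ 2 + d ^ 2 - 2 * d * t) ^ 2 = s ^ 2 + d ^ 2 - 2 * d * t :=
      Real.sq_sqrt hc.le
    simp only [Function.comp_apply]
    field_simp
    nlinarith [hsq, hs0]
  have hcont : ContinuousOn
      (fun t => 2 * Real.sqrt (s ^ 2 + d ^ 2 - 2 * d * t) - 2 * (d - t)) (Set.uIcc (-s) s) := by
    apply ContinuousOn.sub
    · exact (continuous_const.mul (Real.continuous_sqrt.comp (by continuity))).continuousOn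
    · exact (continuous_const.mul (continuous_const.sub continuous_id)).continuousOn
  rw [intervalIntegral.integral_eq_sub_of_hasDerivAt key hcont.intervalIntegrable]
  have e1 : s ^ 2 + d ^ 2 - 2 * d * s = (d - s) ^ 2 := by ring
  have e2 : s ^ 2 + d ^ 2 - 2 * d * (-s) = (d + s) ^ 2 := by ring
  rw [e1, e2, Real.sqrt_sq (by linarith), Real.sqrt_sq (by linarith)]
  field_simp
  ring

/-- trivial outer integral for the volume computation -/
lemma integral_outer_one {s : ℝ} (hs : 0 < s) :
    ∫ t in (-s)..s, (s ^ 2 - t ^ 2) = 4 * s ^ 3 / 3 := by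
  have : ∫ t in (-s)..s, (s ^ 2 - t ^ 2)
      = (s ^ 2 * s - s ^ 3 / 3) - (s ^ 2 * (-s) - (-s) ^ 3 / 3) := by
    have key : ∀ t ∈ Set.uIcc (-s) s,
        HasDerivAt (fun t => s ^ 2 * t - t ^ 3 / 3) (s ^ 2 - t ^ 2) t := by
      intro t _
      have h1 : HasDerivAt (fun t : ℝ => s ^ 2 * t) (s ^ 2) t := by
        simpa using (hasDerivAt_id t).const_mul (s ^ 2)
      have h2 : HasDerivAt (fun t : ℝ => t ^ 3 / 3) (t ^ 2) t := by
        have := (hasDerivAt_pow 3 t).div_const 3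
        refine this.congr_deriv ?_
        norm_num
      exact h1.sub h2
    exact intervalIntegral.integral_eq_sub_of_hasDerivAt key
      ((continuous_const.sub (continuous_pow 2)).continuousOn.intervalIntegrable)
  rw [this]; ring

/-- Disk integral via polar coordinates:
∫_{ℝ²} 1_{‖u‖²≤R²} ψ(‖u‖²) du = π ∫_0^{R²} ψ -/
lemma disk_integral {R : ℝ} (hR : 0 ≤ R) (ψ : ℝ → ℝ) (hψ : Continuous ψ) :
    ∫ u : ℝ × ℝ, Set.indicator {u : ℝ × ℝ | u.1 ^ 2 + u.2 ^ 2 ≤ R ^ 2}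
        (fun u => ψ (u.1 ^ 2 + u.2 ^ 2)) u
      = π * ∫ v in (0:ℝ)..R ^ 2, ψ v := by
  rw [← integral_comp_polarCoord_symm]
  have hT : polarCoord.target = Set.Ioi (0:ℝ) ×ˢ Set.Ioo (-π) π := polarCoord_target
  have hmeas : MeasurableSet polarCoord.target := by
    rw [hT]; exact measurableSet_Ioi.prod measurableSet_Ioo
  have hcongr : ∀ p ∈ polarCoord.target,
      p.1 • Set.indicator {u : ℝ × ℝ | u.1 ^ 2 + u.2 ^ 2 ≤ R ^ 2}
          (fun u => ψ (u.1 ^ 2 + u.2 ^ 2)) (polarCoord.symm p)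
        = Set.indicator (Set.Ioc (0:ℝ) R ×ˢ Set.Ioo (-π) π)
            (fun p : ℝ × ℝ => p.1 * ψ (p.1 ^ 2)) p := by
    intro p hp
    rw [hT] at hp
    obtain ⟨hp1, hp2⟩ := hp
    have hp1' : (0:ℝ) < p.1 := hp1
    have hsymm : ((polarCoord.symm p).1 ^ 2 + (polarCoord.symm p).2 ^ 2) = p.1 ^ 2 := by
      simp only [polarCoord_symm_apply]
      have := Real.sin_sq_add_cos_sq p.2
      ring_nf
      nlinarith [Real.sin_sq_add_cos_sq p.2]
    by_cases hcase : p.1 ≤ R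
    · rw [Set.indicator_of_mem, Set.indicator_of_mem, hsymm, smul_eq_mul]
      · exact ⟨⟨hp1', hcase⟩, hp2⟩
      · rw [Set.mem_setOf_eq, hsymm]
        nlinarith
    · rw [Set.indicator_of_notMem, Set.indicator_of_notMem, smul_zero]
      · rintro ⟨⟨_, h⟩, _⟩; exact hcase h
      · rw [Set.mem_setOf_eq, hsymm]
        intro h
        have : p.1 ≤ R := by nlinarith
        exact hcase this
  rw [setIntegral_congr_fun hmeas hcongr]
  rw [setIntegral_indicator (by exact (measurableSet_Ioc.prod measurableSet_Ioo))]
  have hinter : polarCoord.target ∩ (Set.Ioc (0:ℝ) R ×ˢ Set.Ioo (-π) π)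
      = Set.Ioc (0:ℝ) R ×ˢ Set.Ioo (-π) π := by
    rw [hT, Set.prod_inter_prod, Set.inter_eq_self_of_subset_right Set.Ioc_subset_Ioi_self,
      Set.inter_self]
  rw [hinter]
  have hint : IntegrableOn (fun p : ℝ × ℝ => p.1 * ψ (p.1 ^ 2))
      (Set.Ioc (0:ℝ) R ×ˢ Set.Ioo (-π) π) volume := by
    have hc : Continuous (fun p : ℝ × ℝ => p.1 * ψ (p.1 ^ 2)) :=
      continuous_fst.mul (hψ.comp ((continuous_pow 2).comp continuous_fst))
    have hK : IsCompact (Set.Icc (0:ℝ) R ×ˢ Set.Icc (-π) π) :=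
      isCompact_Icc.prod isCompact_Icc
    exact (hc.continuousOn.integrableOn_compact hK).mono_set
      (Set.prod_mono Set.Ioc_subset_Icc_self Set.Ioo_subset_Icc_self)
  rw [show (volume : Measure (ℝ × ℝ)) = (volume : Measure ℝ).prod volume from
    Measure.volume_eq_prod ℝ ℝ] at hint ⊢
  rw [setIntegral_prod _ hint]
  have hinner : ∀ r : ℝ, (∫ θ in Set.Ioo (-π) π, r * ψ (r ^ 2)) = (2 * π) * (r * ψ (r ^ 2)) := by
    intro r
    rw [setIntegral_const, Real.volume_real_Ioo, show π - -π = 2 * π by ring,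
      max_eq_left (by linarith [Real.pi_pos]), smul_eq_mul]
  simp_rw [hinner]
  have hIoc : (∫ r in Set.Ioc (0:ℝ) R, (2 * π) * (r * ψ (r ^ 2)))
      = ∫ r in (0:ℝ)..R, (2 * π) * (r * ψ (r ^ 2)) := by
    rw [intervalIntegral.integral_of_le hR]
  rw [hIoc]
  have hsub : ∫ r in (0:ℝ)..R, (2 * r) • ψ (r ^ 2) = ∫ v in ((0:ℝ)^2)..(R ^ 2), ψ v := by
    have hder : ∀ r ∈ Set.uIcc (0:ℝ) R, HasDerivAt (fun r : ℝ => r ^ 2) (2 * r) r := by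
      intro r _
      simpa [mul_comm] using (hasDerivAt_id r).fun_pow 2
    exact intervalIntegral.integral_comp_smul_deriv hder
      (continuous_const.mul continuous_id).continuousOn hψ
  have : ∫ r in (0:ℝ)..R, (2 * π) * (r * ψ (r ^ 2))
      = π * ∫ r in (0:ℝ)..R, (2 * r) • ψ (r ^ 2) := by
    rw [← intervalIntegral.integral_const_mul]
    apply intervalIntegral.integral_congr
    intro r _
    simp [smul_eq_mul]
    ring
  rw [this, hsub]
  norm_num




def T3 : E3 ≃ᵐ ℝ × (ℝ × ℝ) :=
  (MeasurableEquiv.toLp 2 (Fin 3 → ℝ)).symm.trans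
    ((MeasurableEquiv.piFinSuccAbove (fun _ : Fin 3 => ℝ) 0).trans
      ((MeasurableEquiv.refl ℝ).prodCongr MeasurableEquiv.finTwoArrow))

lemma T3mp : MeasurePreserving T3 volume volume := by
  have mp1 := EuclideanSpace.volume_preserving_symm_measurableEquiv_toLp (Fin 3)
  have mp2 := MeasureTheory.volume_preserving_piFinSuccAbove (fun _ : Fin 3 => ℝ) 0
  have mp3 : MeasurePreserving
      ((MeasurableEquiv.refl ℝ).prodCongr (MeasurableEquiv.finTwoArrow : (Fin 2 → ℝ) ≃ᵐ ℝ × ℝ))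
      volume volume := by
    have h2 := MeasureTheory.volume_preserving_finTwoArrow ℝ
    have h1 : MeasurePreserving (id : ℝ → ℝ) volume volume := MeasurePreserving.id _
    have := h1.prod (μc := (volume : Measure (Fin 2 → ℝ))) (μd := (volume : Measure (ℝ × ℝ))) h2
    rw [← Measure.volume_eq_prod, ← Measure.volume_eq_prod] at this
    exact this
  exact (mp3.comp mp2).comp mp1

/-- generic reduction of an `E3` integral to iterated integrals -/
lemma reduce3 (f : ℝ → ℝ → ℝ)
    (hI : Integrable (fun p : ℝ × (ℝ × ℝ) => f p.1 (p.2.1 ^ 2 + p.2.2 ^ 2)) volume) :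
    ∫ y : E3, f (y 0) ((y 1) ^ 2 + (y 2) ^ 2)
      = ∫ t : ℝ, ∫ u : ℝ × ℝ, f t (u.1 ^ 2 + u.2 ^ 2) := by
  have h := MeasurePreserving.integral_comp (T3mp.symm) T3.symm.measurableEmbedding
    (fun y : E3 => f (y 0) ((y 1) ^ 2 + (y 2) ^ 2))
  rw [← h]
  have he : (fun p : ℝ × (ℝ × ℝ) =>
      f ((T3.symm p : E3) 0) (((T3.symm p : E3) 1) ^ 2 + ((T3.symm p : E3) 2) ^ 2))
      = fun p : ℝ × (ℝ × ℝ) => f p.1 (p.2.1 ^ 2 + p.2.2 ^ 2) := rfl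
  show ∫ p : ℝ × (ℝ × ℝ), f ((T3.symm p : E3) 0)
      (((T3.symm p : E3) 1) ^ 2 + ((T3.symm p : E3) 2) ^ 2) = _
  rw [he]
  rw [show (volume : Measure (ℝ × (ℝ × ℝ))) = (volume : Measure ℝ).prod volume from
    Measure.volume_eq_prod ℝ (ℝ × ℝ)] at hI ⊢
  exact integral_prod _ hI

/-- membership in the ball in coordinates -/
lemma mem_ball_coords {s : ℝ} (hs : 0 ≤ s) (y : E3) :
    y ∈ closedBall (0 : E3) s ↔ (y 0) ^ 2 + ((y 1) ^ 2 + (y 2) ^ 2) ≤ s ^ 2 := by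
  rw [mem_closedBall, dist_zero_right, EuclideanSpace.norm_eq]
  have hsum : ∑ i : Fin 3, ‖y i‖ ^ 2 = (y 0) ^ 2 + ((y 1) ^ 2 + (y 2) ^ 2) := by
    rw [Fin.sum_univ_three]
    simp [Real.norm_eq_abs, sq_abs]
    ring
  rw [hsum]
  constructor
  · intro h
    have h2 := Real.sqrt_le_sqrt (le_of_eq (rfl : (y 0) ^ 2 + ((y 1) ^ 2 + (y 2) ^ 2) = _))
    nlinarith [Real.sq_sqrt (by positivity : (0:ℝ) ≤ (y 0) ^ 2 + ((y 1) ^ 2 + (y 2) ^ 2)),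
      Real.sqrt_nonneg ((y 0) ^ 2 + ((y 1) ^ 2 + (y 2) ^ 2))]
  · intro h
    calc Real.sqrt ((y 0) ^ 2 + ((y 1) ^ 2 + (y 2) ^ 2)) ≤ Real.sqrt (s ^ 2) :=
          Real.sqrt_le_sqrt h
    _ = s := Real.sqrt_sq hs

/-- norm of `y - d • e₀` in coordinates -/
lemma norm_sub_single (d : ℝ) (y : E3) :
    ‖y - (EuclideanSpace.single (0 : Fin 3) d : E3)‖
      = Real.sqrt ((y 0 - d) ^ 2 + ((y 1) ^ 2 + (y 2) ^ 2)) := by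
  rw [EuclideanSpace.norm_eq]
  congr 1
  rw [Fin.sum_univ_three]
  have h0 : (y - (EuclideanSpace.single (0 : Fin 3) d : E3)) 0 = y 0 - d := by
    simp [EuclideanSpace.single_apply]
  have h1 : (y - (EuclideanSpace.single (0 : Fin 3) d : E3)) 1 = y 1 := by
    simp [EuclideanSpace.single_apply]
  have h2 : (y - (EuclideanSpace.single (0 : Fin 3) d : E3)) 2 = y 2 := by
    simp [EuclideanSpace.single_apply]
  rw [h0, h1, h2]
  simp [Real.norm_eq_abs, sq_abs]
  ring

/-- generic integrability helper -/
lemma integrable_aux {s : ℝ} (hs : 0 < s) (g : ℝ × (ℝ × ℝ) → ℝ) (hg : Measurable g) (M : ℝ)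
    (hbound : ∀ p : ℝ × (ℝ × ℝ), p.1 ^ 2 + (p.2.1 ^ 2 + p.2.2 ^ 2) ≤ s ^ 2 → |g p| ≤ M) :
    Integrable (fun p : ℝ × (ℝ × ℝ) =>
      if p.1 ^ 2 + (p.2.1 ^ 2 + p.2.2 ^ 2) ≤ s ^ 2 then g p else 0) volume := by
  set S : Set (ℝ × (ℝ × ℝ)) := {p | p.1 ^ 2 + (p.2.1 ^ 2 + p.2.2 ^ 2) ≤ s ^ 2} with hS
  have hSmeas : MeasurableSet S := by
    apply measurableSet_le
    · fun_prop
    · exact measurable_const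
  have heq : (fun p : ℝ × (ℝ × ℝ) =>
      if p.1 ^ 2 + (p.2.1 ^ 2 + p.2.2 ^ 2) ≤ s ^ 2 then g p else 0) = S.indicator g := by
    funext p
    rw [Set.indicator_apply]
    rfl
  rw [heq]
  rw [integrable_indicator_iff hSmeas]
  have hbox : S ⊆ Set.Icc (-s) s ×ˢ (Set.Icc (-s) s ×ˢ Set.Icc (-s) s) := by
    rintro ⟨t, u1, u2⟩ hp
    simp only [hS, Set.mem_setOf_eq] at hp
    have h1 : t ^ 2 ≤ s ^ 2 := by nlinarith
    have h2 : u1 ^ 2 ≤ s ^ 2 := by nlinarith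
    have h3 : u2 ^ 2 ≤ s ^ 2 := by nlinarith
    refine ⟨abs_le.mp ?_, abs_le.mp ?_, abs_le.mp ?_⟩ <;>
      · rw [← Real.sqrt_sq hs.le, ← Real.sqrt_sq_eq_abs]
        exact Real.sqrt_le_sqrt (by assumption)
  have hfin : volume S ≠ ⊤ := by
    refine ne_top_of_le_ne_top ?_ (measure_mono hbox)
    exact ((isCompact_Icc.prod (isCompact_Icc.prod isCompact_Icc)).measure_lt_top).ne
  apply Measure.integrableOn_of_bounded hfin hg.aestronglyMeasurable (M := M)
  exact (ae_restrict_iff' hSmeas).mpr (Filter.Eventually.of_forall fun p hp =>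
    by simpa [Real.norm_eq_abs] using hbound p hp)

/-- Newton's theorem, axis version -/
lemma newton_axis {s d : ℝ} (hs : 0 < s) (hsd : s < d) :
    ∫ y in closedBall (0 : E3) s, ‖y - (EuclideanSpace.single (0 : Fin 3) d : E3)‖⁻¹
      = 4 * π * s ^ 3 / (3 * d) := by
  have hd : 0 < d := hs.trans hsd
  set f : ℝ → ℝ → ℝ := fun t q =>
    if t ^ 2 + q ≤ s ^ 2 then (Real.sqrt ((t - d) ^ 2 + max q 0))⁻¹ else 0 with hf
  have hstep : ∫ y in closedBall (0 : E3) s,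
      ‖y - (EuclideanSpace.single (0 : Fin 3) d : E3)‖⁻¹
      = ∫ y : E3, f (y 0) ((y 1) ^ 2 + (y 2) ^ 2) := by
    rw [← integral_indicator (measurableSet_closedBall)]
    congr 1
    funext y
    by_cases hy : y ∈ closedBall (0 : E3) s
    · rw [Set.indicator_of_mem hy]
      have hcond := (mem_ball_coords hs.le y).mp hy
      simp only [hf]
      rw [if_pos hcond, norm_sub_single]
      congr 2
      rw [max_eq_left (by positivity)]
    · rw [Set.indicator_of_notMem hy]
      simp only [hf]
      rw [if_neg (fun hcond => hy ((mem_ball_coords hs.le y).mpr hcond))]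
  rw [hstep]
  -- integrability
  have hI : Integrable (fun p : ℝ × (ℝ × ℝ) => f p.1 (p.2.1 ^ 2 + p.2.2 ^ 2)) volume := by
    have := integrable_aux hs
      (fun p : ℝ × (ℝ × ℝ) => (Real.sqrt ((p.1 - d) ^ 2 + max (p.2.1 ^ 2 + p.2.2 ^ 2) 0))⁻¹)
      (by fun_prop) ((d - s)⁻¹) ?_
    · exact this
    · rintro ⟨t, u1, u2⟩ hp
      simp only at hp ⊢
      have ht : t ≤ s := by nlinarith
      have h1 : d - s ≤ Real.sqrt ((t - d) ^ 2 + max (u1 ^ 2 + u2 ^ 2) 0) := by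
        have : (d - s) ^ 2 ≤ (t - d) ^ 2 + max (u1 ^ 2 + u2 ^ 2) 0 := by
          have := le_max_right (u1 ^ 2 + u2 ^ 2) 0
          nlinarith [le_max_right (u1 ^ 2 + u2 ^ 2) 0]
        calc d - s = Real.sqrt ((d - s) ^ 2) := (Real.sqrt_sq (by linarith)).symm
        _ ≤ _ := Real.sqrt_le_sqrt this
      rw [abs_of_nonneg (by positivity)]
      exact inv_anti₀ (by linarith) h1
  rw [reduce3 f hI]
  -- inner integral
  have hinner : ∀ t : ℝ, (∫ u : ℝ × ℝ, f t (u.1 ^ 2 + u.2 ^ 2))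
      = Set.indicator (Set.Icc (-s) s)
          (fun t => π * (2 * Real.sqrt (s ^ 2 + d ^ 2 - 2 * d * t) - 2 * (d - t))) t := by
    intro t
    by_cases ht : t ∈ Set.Icc (-s) s
    · have ht2 : t ^ 2 ≤ s ^ 2 := by
        obtain ⟨h1, h2⟩ := ht
        nlinarith
      have hdt : 0 < d - t := by
        obtain ⟨h1, h2⟩ := ht
        linarith
      set R := Real.sqrt (s ^ 2 - t ^ 2) with hRdef
      have hR0 : 0 ≤ R := Real.sqrt_nonneg _
      have hR2 : R ^ 2 = s ^ 2 - t ^ 2 := Real.sq_sqrt (by linarith)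
      set ψ : ℝ → ℝ := fun v => (Real.sqrt ((t - d) ^ 2 + max v 0))⁻¹ with hψdef
      have htd : 0 < (t - d) ^ 2 := by nlinarith [mul_pos hdt hdt]
      have hψcont : Continuous ψ := by
        apply Continuous.inv₀
        · exact Real.continuous_sqrt.comp
            (continuous_const.add (continuous_id.max continuous_const))
        · intro v
          have hpos : 0 < (t - d) ^ 2 + max v 0 := by
            have := le_max_right v 0
            linarith
          exact (Real.sqrt_pos.mpr hpos).ne'
      have hshape : (fun u : ℝ × ℝ => f t (u.1 ^ 2 + u.2 ^ 2))
          = Set.indicator {u : ℝ × ℝ | u.1 ^ 2 + u.2 ^ 2 ≤ R ^ 2}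
              (fun u => ψ (u.1 ^ 2 + u.2 ^ 2)) := by
        funext u
        rw [Set.indicator_apply]
        simp only [hf]
        have hcond : (t ^ 2 + (u.1 ^ 2 + u.2 ^ 2) ≤ s ^ 2)
            ↔ (u ∈ {u : ℝ × ℝ | u.1 ^ 2 + u.2 ^ 2 ≤ R ^ 2}) := by
          rw [Set.mem_setOf_eq, hR2]
          constructor <;> intro <;> linarith
        by_cases hc : t ^ 2 + (u.1 ^ 2 + u.2 ^ 2) ≤ s ^ 2
        · rw [if_pos hc, if_pos (hcond.mp hc)]
        · rw [if_neg hc, if_neg (fun hmem => hc (hcond.mpr hmem))]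
      have hre : ∫ u : ℝ × ℝ, f t (u.1 ^ 2 + u.2 ^ 2)
          = ∫ u : ℝ × ℝ, Set.indicator {u : ℝ × ℝ | u.1 ^ 2 + u.2 ^ 2 ≤ R ^ 2}
              (fun u => ψ (u.1 ^ 2 + u.2 ^ 2)) u := by
        rw [hshape]
      rw [hre, disk_integral hR0 ψ hψcont]
      have hival : ∫ v in (0:ℝ)..R ^ 2, ψ v
          = 2 * Real.sqrt (s ^ 2 + d ^ 2 - 2 * d * t) - 2 * (d - t) := by
        have hcongr : Set.EqOn ψ (fun v => (Real.sqrt (v + (d - t) ^ 2))⁻¹)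
            (Set.uIcc (0:ℝ) (R ^ 2)) := by
          intro v hv
          have hv0 : 0 ≤ v := uIcc_nonneg (by positivity) hv
          simp only [hψdef]
          rw [max_eq_left hv0, show (t - d) ^ 2 + v = v + (d - t) ^ 2 from by ring]
        rw [intervalIntegral.integral_congr hcongr]
        rw [integral_inv_sqrt_add hdt (by positivity)]
        rw [hR2, show s ^ 2 - t ^ 2 + (d - t) ^ 2 = s ^ 2 + d ^ 2 - 2 * d * t from by ring]
      rw [hival, Set.indicator_of_mem ht]
    · have hst : s ^ 2 < t ^ 2 := by
        rw [Set.mem_Icc] at ht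
        push_neg at ht
        rcases le_or_gt (-s) t with h | h
        · have := ht h
          nlinarith
        · nlinarith
      have hzero : (fun u : ℝ × ℝ => f t (u.1 ^ 2 + u.2 ^ 2)) = fun _ : ℝ × ℝ => (0:ℝ) := by
        funext u
        simp only [hf]
        exact if_neg (by nlinarith [sq_nonneg u.1, sq_nonneg u.2])
      have : ∫ u : ℝ × ℝ, f t (u.1 ^ 2 + u.2 ^ 2) = 0 := by
        rw [hzero, integral_zero]
      rw [this, Set.indicator_of_notMem ht]
  rw [show (fun t : ℝ => ∫ u : ℝ × ℝ, f t (u.1 ^ 2 + u.2 ^ 2))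
      = Set.indicator (Set.Icc (-s) s)
          (fun t => π * (2 * Real.sqrt (s ^ 2 + d ^ 2 - 2 * d * t) - 2 * (d - t)))
    from funext hinner]
  rw [integral_indicator measurableSet_Icc, MeasureTheory.integral_Icc_eq_integral_Ioc,
    ← intervalIntegral.integral_of_le (by linarith : -s ≤ s),
    intervalIntegral.integral_const_mul, integral_outer hs hsd]
  field_simp

lemma vol_axis {s : ℝ} (hs : 0 < s) :
    ∫ _y in closedBall (0 : E3) s, (1:ℝ) = 4 * π * s ^ 3 / 3 := by
  set f : ℝ → ℝ → ℝ := fun t q => if t ^ 2 + q ≤ s ^ 2 then 1 else 0 with hf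
  have hstep : ∫ _y in closedBall (0 : E3) s, (1:ℝ)
      = ∫ y : E3, f (y 0) ((y 1) ^ 2 + (y 2) ^ 2) := by
    rw [← integral_indicator (measurableSet_closedBall)]
    congr 1
    funext y
    by_cases hy : y ∈ closedBall (0 : E3) s
    · rw [Set.indicator_of_mem hy]
      simp only [hf]
      rw [if_pos ((mem_ball_coords hs.le y).mp hy)]
    · rw [Set.indicator_of_notMem hy]
      simp only [hf]
      rw [if_neg (fun hcond => hy ((mem_ball_coords hs.le y).mpr hcond))]
  rw [hstep]
  have hI : Integrable (fun p : ℝ × (ℝ × ℝ) => f p.1 (p.2.1 ^ 2 + p.2.2 ^ 2)) volume := by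
    have := integrable_aux hs (fun _ => (1:ℝ)) measurable_const 1 (by intro p _; simp)
    exact this
  rw [reduce3 f hI]
  have hinner : ∀ t : ℝ, (∫ u : ℝ × ℝ, f t (u.1 ^ 2 + u.2 ^ 2))
      = Set.indicator (Set.Icc (-s) s) (fun t => π * (s ^ 2 - t ^ 2)) t := by
    intro t
    by_cases ht : t ∈ Set.Icc (-s) s
    · have ht2 : t ^ 2 ≤ s ^ 2 := by
        obtain ⟨h1, h2⟩ := ht
        nlinarith
      set R := Real.sqrt (s ^ 2 - t ^ 2) with hRdef
      have hR0 : 0 ≤ R := Real.sqrt_nonneg _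
      have hR2 : R ^ 2 = s ^ 2 - t ^ 2 := Real.sq_sqrt (by linarith)
      have hshape : (fun u : ℝ × ℝ => f t (u.1 ^ 2 + u.2 ^ 2))
          = Set.indicator {u : ℝ × ℝ | u.1 ^ 2 + u.2 ^ 2 ≤ R ^ 2}
              (fun u => (fun _ => (1:ℝ)) (u.1 ^ 2 + u.2 ^ 2)) := by
        funext u
        rw [Set.indicator_apply]
        simp only [hf]
        have hcond : (t ^ 2 + (u.1 ^ 2 + u.2 ^ 2) ≤ s ^ 2)
            ↔ (u ∈ {u : ℝ × ℝ | u.1 ^ 2 + u.2 ^ 2 ≤ R ^ 2}) := by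
          rw [Set.mem_setOf_eq, hR2]
          constructor <;> intro <;> linarith
        by_cases hc : t ^ 2 + (u.1 ^ 2 + u.2 ^ 2) ≤ s ^ 2
        · rw [if_pos hc, if_pos (hcond.mp hc)]
        · rw [if_neg hc, if_neg (fun hmem => hc (hcond.mpr hmem))]
      have hre : ∫ u : ℝ × ℝ, f t (u.1 ^ 2 + u.2 ^ 2)
          = ∫ u : ℝ × ℝ, Set.indicator {u : ℝ × ℝ | u.1 ^ 2 + u.2 ^ 2 ≤ R ^ 2}
              (fun u => (fun _ => (1:ℝ)) (u.1 ^ 2 + u.2 ^ 2)) u := by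
        rw [hshape]
      rw [hre, disk_integral hR0 (fun _ => (1:ℝ)) continuous_const]
      rw [intervalIntegral.integral_const, smul_eq_mul, Set.indicator_of_mem ht]
      rw [hR2]
      ring
    · have hst : s ^ 2 < t ^ 2 := by
        rw [Set.mem_Icc] at ht
        push_neg at ht
        rcases le_or_gt (-s) t with h | h
        · have := ht h
          nlinarith
        · nlinarith
      have hzero : (fun u : ℝ × ℝ => f t (u.1 ^ 2 + u.2 ^ 2)) = fun _ : ℝ × ℝ => (0:ℝ) := by
        funext u
        simp only [hf]
        exact if_neg (by nlinarith [sq_nonneg u.1, sq_nonneg u.2])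
      have : ∫ u : ℝ × ℝ, f t (u.1 ^ 2 + u.2 ^ 2) = 0 := by
        rw [hzero, integral_zero]
      rw [this, Set.indicator_of_notMem ht]
  rw [show (fun t : ℝ => ∫ u : ℝ × ℝ, f t (u.1 ^ 2 + u.2 ^ 2))
      = Set.indicator (Set.Icc (-s) s) (fun t => π * (s ^ 2 - t ^ 2))
    from funext hinner]
  rw [integral_indicator measurableSet_Icc, MeasureTheory.integral_Icc_eq_integral_Ioc,
    ← intervalIntegral.integral_of_le (by linarith : -s ≤ s),
    intervalIntegral.integral_const_mul, integral_outer_one hs]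
  ring

/-- volume of closed balls in E3 -/
lemma vol_closedBall (x : E3) {s : ℝ} (hs : 0 < s) :
    (volume (closedBall x s)).toReal = 4 * π * s ^ 3 / 3 := by
  have h1 : ∫ _y in closedBall x s, (1:ℝ) = (volume (closedBall x s)).toReal := by
    rw [setIntegral_const, smul_eq_mul, mul_one]
    rfl
  rw [← h1]
  have htrans : ∫ _y in closedBall x s, (1:ℝ) = ∫ _z in closedBall (0 : E3) s, (1:ℝ) := by
    rw [setIntegral_const, setIntegral_const]
    congr 1
    exact congrArg ENNReal.toReal (Measure.addHaar_closedBall_center volume x s)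
  rw [htrans]
  exact vol_axis hs

/-- Newton's theorem: general version -/
lemma newton_ball {s : ℝ} (hs : 0 < s) (x A : E3) (hsd : s < ‖x - A‖) :
    ∫ y in closedBall x s, ‖y - A‖⁻¹ = 4 * π * s ^ 3 / (3 * ‖x - A‖) := by
  set d := ‖x - A‖ with hd'
  have hd : 0 < d := hs.trans hsd
  -- translation step
  have htrans : ∫ y in closedBall x s, ‖y - A‖⁻¹
      = ∫ z in closedBall (0 : E3) s, ‖z - (A - x)‖⁻¹ := by
    rw [← integral_indicator (measurableSet_closedBall),
      ← integral_indicator (measurableSet_closedBall)]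
    have hmp : MeasurePreserving (fun z : E3 => x + z) volume volume :=
      measurePreserving_add_left volume x
    have hme : MeasurableEmbedding (fun z : E3 => x + z) :=
      (Homeomorph.addLeft x).measurableEmbedding
    rw [← hmp.integral_comp hme]
    congr 1
    funext z
    have hmem : (x + z ∈ closedBall x s) ↔ (z ∈ closedBall (0:E3) s) := by
      simp [mem_closedBall, dist_eq_norm]
    by_cases hz : z ∈ closedBall (0 : E3) s
    · rw [Set.indicator_of_mem (hmem.mpr hz), Set.indicator_of_mem hz]
      congr 1
      congr 1
      abel
    · rw [Set.indicator_of_notMem (fun hc => hz (hmem.mp hc)), Set.indicator_of_notMem hz]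
  rw [htrans]
  -- reflection step
  set w : E3 := A - x with hw'
  have hwnorm : ‖w‖ = d := by rw [hw', hd', norm_sub_rev]
  set v₀ : E3 := EuclideanSpace.single (0 : Fin 3) d with hv₀'
  have hv₀norm : ‖v₀‖ = d := by
    rw [hv₀', EuclideanSpace.norm_single, Real.norm_eq_abs, abs_of_pos hd]
  set T : E3 ≃ₗᵢ[ℝ] E3 := Submodule.reflection (Submodule.span ℝ {v₀ - w})ᗮ with hT'
  have hTv : T v₀ = w := Submodule.reflection_sub (by rw [hv₀norm, hwnorm])
  have hrefl : ∫ z in closedBall (0 : E3) s, ‖z - w‖⁻¹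
      = ∫ z in closedBall (0 : E3) s, ‖z - v₀‖⁻¹ := by
    rw [← integral_indicator (measurableSet_closedBall),
      ← integral_indicator (measurableSet_closedBall)]
    have hmp : MeasurePreserving (⇑T) volume volume := T.measurePreserving
    have hme : MeasurableEmbedding (⇑T) := T.toHomeomorph.measurableEmbedding
    rw [← hmp.integral_comp hme]
    congr 1
    funext z
    have hmem : (T z ∈ closedBall (0:E3) s) ↔ (z ∈ closedBall (0:E3) s) := by
      simp [mem_closedBall, dist_eq_norm, T.norm_map]
    by_cases hz : z ∈ closedBall (0 : E3) s
    · rw [Set.indicator_of_mem (hmem.mpr hz), Set.indicator_of_mem hz]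
      have : T z - w = T (z - v₀) := by rw [map_sub, hTv]
      rw [this, T.norm_map]
    · rw [Set.indicator_of_notMem (fun hc => hz (hmem.mp hc)), Set.indicator_of_notMem hz]
  rw [hrefl]
  exact newton_axis hs hsd


/-- The modified electrostatic potential `V_p(x) = ∑ i, ζ i ^ p / ‖x - A i‖ ^ p`
(real exponent `p`). -/
def Vp {n : ℕ} (A : Fin n → E3) (ζ : Fin n → ℝ) (p : ℝ) : E3 → ℝ :=
  fun x => ∑ i, ζ i ^ p / ‖x - A i‖ ^ p

/-- for `p ≥ 1` and positive charges, `V_p` has no local maximum on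
its domain `ℝ³ ∖ {A_1, …, A_n}`. -/
theorem stmt15 (n : ℕ) (hn : 0 < n) (A : Fin n → E3) (hA : Function.Injective A)
    (ζ : Fin n → ℝ) (hζ : ∀ i, 0 < ζ i) (p : ℝ) (hp : 1 ≤ p) :
    ∀ x : E3, (∀ i, x ≠ A i) →
      ¬ IsLocalMaxOn (Vp A ζ p) {y : E3 | ∀ i, y ≠ A i} x := by
  intro x hx hmax
  classical
  set Ω : Set E3 := {y : E3 | ∀ i, y ≠ A i} with hΩ
  set V : E3 → ℝ := Vp A ζ p with hV
  have hΩeq : Ω = (Set.range A)ᶜ := by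
    ext y
    simp only [hΩ, Set.mem_setOf_eq, Set.mem_compl_iff, Set.mem_range, not_exists]
    constructor
    · intro h i hi
      exact h i hi.symm
    · intro h i hi
      exact h i hi.symm
  have hΩopen : IsOpen Ω := by
    rw [hΩeq]
    exact (Set.Finite.isClosed (Set.finite_range A)).isOpen_compl
  have hxΩ : x ∈ Ω := hx
  have hmax' : ∀ᶠ y in nhdsWithin x Ω, V y ≤ V x := hmax
  rw [hΩopen.nhdsWithin_eq hxΩ] at hmax'
  obtain ⟨ε, hε, hball⟩ := Metric.eventually_nhds_iff_ball.mp hmax'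
  have hneFin : Nonempty (Fin n) := ⟨⟨0, hn⟩⟩
  have hne : (Finset.univ : Finset (Fin n)).Nonempty := Finset.univ_nonempty
  set dmin : ℝ := Finset.univ.inf' hne (fun i => ‖x - A i‖) with hdmin
  have hdminpos : 0 < dmin := by
    rw [hdmin, Finset.lt_inf'_iff]
    intro i _
    have : x - A i ≠ 0 := sub_ne_zero.mpr (hx i)
    exact norm_pos_iff.mpr this
  set s : ℝ := min (ε / 2) (dmin / 2) with hs'
  have hs : 0 < s := lt_min (by linarith) (by linarith)
  set B : Set E3 := closedBall x s with hB
  have hslt : ∀ i, s < ‖x - A i‖ := by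
    intro i
    have h1 : dmin ≤ ‖x - A i‖ := Finset.inf'_le _ (Finset.mem_univ i)
    have h2 : s ≤ dmin / 2 := min_le_right _ _
    linarith
  have hdist : ∀ i, ∀ y ∈ B, dmin / 2 ≤ ‖y - A i‖ := by
    intro i y hy
    have h1 : dmin ≤ ‖x - A i‖ := Finset.inf'_le _ (Finset.mem_univ i)
    have h2 : ‖y - x‖ ≤ s := by
      rw [← dist_eq_norm]
      exact mem_closedBall.mp hy
    have h3 : ‖x - A i‖ ≤ ‖x - y‖ + ‖y - A i‖ := by
      calc ‖x - A i‖ = ‖(x - y) + (y - A i)‖ := by abel_nf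
      _ ≤ ‖x - y‖ + ‖y - A i‖ := norm_add_le _ _
    rw [norm_sub_rev] at h2
    have h4 : s ≤ dmin / 2 := min_le_right _ _
    linarith
  have hBne : ∀ i, ∀ y ∈ B, y ≠ A i := by
    intro i y hy hc
    have := hdist i y hy
    rw [hc, sub_self, norm_zero] at this
    linarith
  have hBΩ : B ⊆ Ω := fun y hy i => hBne i y hy
  have hsubball : B ⊆ ball x ε := by
    intro y hy
    have := mem_closedBall.mp hy
    have h2 : s ≤ ε / 2 := min_le_left _ _
    exact mem_ball.mpr (by linarith)
  have hVle : ∀ y ∈ B, V y ≤ V x := fun y hy => hball y (hsubball hy)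
  -- Newton
  set m : ℝ := 4 * π * s ^ 3 / 3 with hm'
  have hmpos : 0 < m := by
    rw [hm']
    have := Real.pi_pos
    positivity
  have hvol : (volume B).toReal = m := vol_closedBall x hs
  set g : Fin n → E3 → ℝ := fun i y => ‖y - A i‖⁻¹ with hg
  set r : Fin n → ℝ := fun i => ‖x - A i‖ with hr
  have hrpos : ∀ i, 0 < r i := fun i => hs.trans (hslt i)
  have hNewton : ∀ i, ∫ y in B, g i y = m * (r i)⁻¹ := by
    intro i
    rw [hB, hg]
    simp only
    rw [newton_ball hs x (A i) (hslt i), hm', hr]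
    field_simp
  have hgpos : ∀ i, ∀ y ∈ B, 0 < ‖y - A i‖ := fun i y hy => by
    have := hdist i y hy; linarith
  have hgcont : ∀ i, ContinuousOn (g i) B := by
    intro i
    apply ContinuousOn.inv₀
    · exact ((continuous_id.sub continuous_const).norm).continuousOn
    · exact fun y hy => (hgpos i y hy).ne'
  have hgne : ∀ i, ∀ y ∈ B, (‖y - A i‖ : ℝ) ≠ 0 := fun i y hy => (hgpos i y hy).ne'
  -- V in terms of g on B
  have hVeq : ∀ y ∈ B, V y = ∑ i, ζ i ^ p * (g i y) ^ p := by
    intro y _hy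
    rw [hV]
    unfold Vp
    refine Finset.sum_congr rfl fun i _ => ?_
    rw [hg]
    simp only
    rw [Real.inv_rpow (norm_nonneg _), ← div_eq_mul_inv]
  have hVxeq : V x = ∑ i, ζ i ^ p * ((r i)⁻¹) ^ p := by
    have hxB : x ∈ B := mem_closedBall_self hs.le
    rw [hVeq x hxB]
  -- continuity and integrability on B
  have hgp_cont : ∀ i, ContinuousOn (fun y => (g i y) ^ p) B := by
    intro i
    exact (hgcont i).rpow_const (fun y hy => Or.inl (by
      rw [hg]; simp only; exact inv_ne_zero (hgne i y hy)))
  have hgp_int : ∀ i, IntegrableOn (fun y => ζ i ^ p * (g i y) ^ p) B volume := by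
    intro i
    exact (((hgp_cont i).const_smul (ζ i ^ p)).integrableOn_compact (isCompact_closedBall x s))
  have hVint : IntegrableOn V B volume :=
    IntegrableOn.congr_fun (MeasureTheory.integrable_finset_sum _ (fun i _ => hgp_int i))
      (fun y hy => (hVeq y hy).symm) measurableSet_closedBall
  have hIntV : ∫ y in B, V y = ∑ i, ζ i ^ p * ∫ y in B, (g i y) ^ p := by
    rw [setIntegral_congr_fun measurableSet_closedBall hVeq]
    rw [integral_finset_sum _ (fun i _ => hgp_int i)]
    refine Finset.sum_congr rfl fun i _ => ?_
    exact integral_const_mul _ _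
  have hintVle : ∫ y in B, V y ≤ m * V x := by
    have h1 : ∫ y in B, V y ≤ ∫ _y in B, V x :=
      setIntegral_mono_on hVint (integrableOn_const measure_closedBall_lt_top.ne)
        measurableSet_closedBall hVle
    rwa [setIntegral_const, smul_eq_mul, Measure.real, hvol] at h1
  haveI hfinB : IsFiniteMeasure (volume.restrict B) := by
    constructor
    rw [Measure.restrict_apply_univ]
    exact measure_closedBall_lt_top
  have hgint : ∀ i, IntegrableOn (g i) B volume := by
    intro i
    exact (hgcont i).integrableOn_compact (isCompact_closedBall x s)
  have havg : ∀ i, ⨍ y, g i y ∂(volume.restrict B) = (r i)⁻¹ := by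
    intro i
    rw [average_eq, Measure.real, Measure.restrict_apply_univ, hvol, smul_eq_mul]
    have : ∫ y, g i y ∂(volume.restrict B) = ∫ y in B, g i y := rfl
    rw [this, hNewton i, ← mul_assoc, inv_mul_cancel₀ hmpos.ne', one_mul]
  -- the two cases
  rcases eq_or_lt_of_le hp with hp1 | hp1
  · -- p = 1 : mean value property + identity theorem
    subst hp1
    simp only [Real.rpow_one] at hIntV hVxeq
    have hV1 : V = fun y => ∑ i, ζ i * ‖y - A i‖⁻¹ := by
      funext y
      rw [hV]
      unfold Vp
      refine Finset.sum_congr rfl fun i _ => ?_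
      rw [Real.rpow_one, Real.rpow_one, div_eq_mul_inv]
    -- exact mean value equality
    have hIntVeq : ∫ y in B, V y = m * V x := by
      rw [hIntV, hVxeq, Finset.mul_sum]
      refine Finset.sum_congr rfl fun i _ => ?_
      rw [hNewton i]
      ring
    -- V = V x a.e. on B
    have hIntZero : ∫ y in B, (V x - V y) = 0 := by
      rw [integral_sub (integrableOn_const (C := V x) measure_closedBall_lt_top.ne) hVint]
      rw [setIntegral_const, smul_eq_mul, Measure.real, hvol, hIntVeq]
      ring
    have hnn : 0 ≤ᶠ[ae (volume.restrict B)] fun y => V x - V y := by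
      rw [Filter.EventuallyLE]
      rw [ae_restrict_iff' measurableSet_closedBall]
      exact Filter.Eventually.of_forall fun y hy => by
        simp only [Pi.zero_apply]
        linarith [hVle y hy]
    have hint0 : Integrable (fun y => V x - V y) (volume.restrict B) :=
      (integrableOn_const (C := V x) measure_closedBall_lt_top.ne).sub hVint
    have hae : (fun y => V x - V y) =ᶠ[ae (volume.restrict B)] 0 :=
      (integral_eq_zero_iff_of_nonneg_ae hnn hint0).mp hIntZero
    -- hence V = V x on the open ball
    have hVmeas : Measurable V := by
      rw [hV1]
      exact Finset.measurable_sum _ (fun i _ => measurable_const.mul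
        ((continuous_norm.comp (continuous_id.sub continuous_const)).measurable.inv))
    have hnull : volume ({y : E3 | V x - V y ≠ 0} ∩ B) = 0 := by
      have h1 : (volume.restrict B) {y : E3 | V x - V y ≠ 0} = 0 := by
        have := hae
        rw [Filter.EventuallyEq, ae_iff] at this
        simpa using this
      have hms : MeasurableSet {y : E3 | V x - V y ≠ 0} :=
        ((measurable_const.sub hVmeas) (measurableSet_singleton (0:ℝ))).compl
      rwa [Measure.restrict_apply hms] at h1
    have hVcontΩ : ContinuousOn V Ω := by
      rw [hV1]
      apply continuousOn_finset_sum
      intro i _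
      apply ContinuousOn.mul continuousOn_const
      apply ContinuousOn.inv₀ ((continuous_id.sub continuous_const).norm).continuousOn
      intro y hy
      simpa [sub_eq_zero] using (hy i)
    set W : Set E3 := ball x s ∩ (Ω ∩ V ⁻¹' ({V x}ᶜ)) with hW
    have hWopen : IsOpen W :=
      isOpen_ball.inter (hVcontΩ.isOpen_inter_preimage hΩopen isOpen_compl_singleton)
    have hWnull : volume W = 0 := by
      refine measure_mono_null ?_ hnull
      rintro y ⟨hy1, _, hy3⟩
      refine ⟨?_, ball_subset_closedBall hy1⟩
      simp only [Set.mem_setOf_eq, sub_ne_zero]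
      exact fun hc => hy3 (by simp [hc.symm])
    have hWempty : W = ∅ := hWopen.eq_empty_of_measure_zero hWnull
    have hEqOn : Set.EqOn V (fun _ => V x) (ball x s) := by
      intro y hy
      by_contra hc
      have hyW : y ∈ W := ⟨hy, hBΩ (ball_subset_closedBall hy), by
        simp only [Set.mem_preimage, Set.mem_compl_iff, Set.mem_singleton_iff]
        exact hc⟩
      rw [hWempty] at hyW
      exact hyW
    -- identity theorem
    have hana : AnalyticOnNhd ℝ V Ω := by
      rw [hV1]
      intro y hy
      apply Finset.analyticAt_fun_sum
      intro i _
      exact analyticAt_const.mul (analyticAt_inv_norm (A i) (hy i))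
    have hrank : 1 < Module.rank ℝ E3 := by
      rw [← Module.finrank_eq_rank, finrank_euclideanSpace_fin]
      exact_mod_cast (by norm_num : (1:ℕ) < 3)
    have hpre : IsPreconnected Ω := by
      rw [hΩeq]
      exact ((Set.finite_range A).countable.isPathConnected_compl_of_one_lt_rank
        hrank).isConnected.isPreconnected
    have hev : V =ᶠ[nhds x] (fun _ => V x) :=
      Filter.eventuallyEq_of_mem (isOpen_ball.mem_nhds (mem_ball_self hs)) hEqOn
    have hall : Set.EqOn V (fun _ => V x) Ω :=
      hana.eqOn_of_preconnected_of_eventuallyEq analyticOnNhd_const hpre hxΩ hev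
    -- blow-up contradiction near A i0
    set i0 : Fin n := ⟨0, hn⟩ with hi0
    have hΩmem : Ω ∈ nhdsWithin (A i0) {A i0}ᶜ := by
      rw [mem_nhdsWithin]
      refine ⟨{y : E3 | ∀ j, A j ≠ A i0 → y ≠ A j}, ?_, ?_, ?_⟩
      · have hrepr : {y : E3 | ∀ j, A j ≠ A i0 → y ≠ A j}
            = ⋂ j : Fin n, {y : E3 | A j ≠ A i0 → y ≠ A j} := by
          ext y
          simp [Set.mem_iInter]
        rw [hrepr]
        apply isOpen_iInter_of_finite
        intro j
        by_cases h : A j = A i0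
        · have : {y : E3 | A j ≠ A i0 → y ≠ A j} = Set.univ := by
            ext y
            simp [h]
          rw [this]
          exact isOpen_univ
        · have : {y : E3 | A j ≠ A i0 → y ≠ A j} = {A j}ᶜ := by
            ext y
            simp [h]
          rw [this]
          exact isOpen_compl_singleton
      · exact fun j hj => hj.symm
      · rintro y ⟨hy1, hy2⟩ i
        by_cases h : A i = A i0
        · rw [h]
          exact hy2
        · exact hy1 i h
    have h1 : Filter.Tendsto (fun y : E3 => ‖y - A i0‖) (nhdsWithin (A i0) {A i0}ᶜ)
        (nhdsWithin 0 (Set.Ioi 0)) := by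
      rw [tendsto_nhdsWithin_iff]
      constructor
      · have hc : Filter.Tendsto (fun y : E3 => ‖y - A i0‖) (nhds (A i0))
            (nhds ‖(A i0 : E3) - A i0‖) :=
          ((continuous_id.sub continuous_const).norm).tendsto (A i0)
        rw [sub_self, norm_zero] at hc
        exact hc.mono_left nhdsWithin_le_nhds
      · refine eventually_mem_nhdsWithin.mono fun y hy => ?_
        simp only [Set.mem_Ioi]
        have : y - A i0 ≠ 0 := sub_ne_zero.mpr hy
        exact norm_pos_iff.mpr this
    have h2 : Filter.Tendsto (fun t : ℝ => t⁻¹) (nhdsWithin 0 (Set.Ioi 0)) Filter.atTop :=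
      tendsto_inv_nhdsGT_zero
    have h3 : Filter.Tendsto (fun y : E3 => ζ i0 * ‖y - A i0‖⁻¹)
        (nhdsWithin (A i0) {A i0}ᶜ) Filter.atTop :=
      (h2.comp h1).const_mul_atTop (hζ i0)
    have hlow : ∀ᶠ y in nhdsWithin (A i0) {A i0}ᶜ, ζ i0 * ‖y - A i0‖⁻¹ ≤ V y := by
      refine Filter.eventually_of_mem hΩmem fun y hy => ?_
      rw [hV1]
      refine Finset.single_le_sum (f := fun j => ζ j * ‖y - A j‖⁻¹) ?_ (Finset.mem_univ i0)
      intro j _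
      have : (0:ℝ) ≤ ζ j := (hζ j).le
      positivity
    have htendV : Filter.Tendsto V (nhdsWithin (A i0) {A i0}ᶜ) Filter.atTop :=
      Filter.tendsto_atTop_mono' _ hlow h3
    have hevconst : ∀ᶠ y in nhdsWithin (A i0) {A i0}ᶜ, V y = V x :=
      Filter.eventually_of_mem hΩmem fun y hy => hall hy
    have hgt : ∀ᶠ y in nhdsWithin (A i0) {A i0}ᶜ, V x < V y :=
      htendV.eventually_gt_atTop (V x)
    obtain ⟨y, hy1, hy2⟩ := (hevconst.and hgt).exists
    rw [hy1] at hy2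
    exact lt_irrefl _ hy2
  · -- 1 < p : strict Jensen
    have hjensen : ∀ i, ((r i)⁻¹) ^ p < (m)⁻¹ * ∫ y in B, (g i y) ^ p := by
      intro i
      have hrpowc : ContinuousOn (fun t : ℝ => t ^ p) (Set.Ici 0) :=
        continuousOn_id.rpow_const (fun t _ => Or.inr (by linarith))
      have hfs : ∀ᵐ y ∂(volume.restrict B), g i y ∈ Set.Ici (0:ℝ) :=
        Filter.Eventually.of_forall (fun y => by
          rw [hg]; simp only [Set.mem_Ici]; positivity)
      have hfi : Integrable (g i) (volume.restrict B) := hgint i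
      have hgi' : Integrable ((fun t : ℝ => t ^ p) ∘ (g i)) (volume.restrict B) := by
        have h2 : IntegrableOn (fun y => (g i y) ^ p) B volume :=
          (hgp_cont i).integrableOn_compact (isCompact_closedBall x s)
        exact h2
      rcases (strictConvexOn_rpow hp1).ae_eq_const_or_map_average_lt hrpowc isClosed_Ici
          hfs hfi hgi' with hconst | hlt
      · exfalso
        rw [havg i] at hconst
        have hnull : (volume.restrict B) {y | g i y ≠ (r i)⁻¹} = 0 := by
          have := hconst
          rw [Filter.EventuallyEq, ae_iff] at this
          exact this
        have hmeas_ne : MeasurableSet {y : E3 | g i y ≠ (r i)⁻¹} := by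
          have hmg : Measurable (g i) := by
            rw [hg]
            exact (continuous_norm.comp (continuous_id.sub continuous_const)).measurable.inv
          exact (hmg (measurableSet_singleton _)).compl
        rw [Measure.restrict_apply hmeas_ne] at hnull
        have hsphere : {y : E3 | g i y = (r i)⁻¹} ⊆ sphere (A i) (r i) := by
          intro y hy
          rw [Set.mem_setOf_eq, hg] at hy
          simp only at hy
          have : ‖y - A i‖ = r i := by
            have := inv_injective hy
            exact this
          rwa [mem_sphere_iff_norm]
        have hcover : volume B ≤ volume ({y : E3 | g i y ≠ (r i)⁻¹} ∩ B)
            + volume (sphere (A i) (r i)) := by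
          have hsub : B ⊆ ({y : E3 | g i y ≠ (r i)⁻¹} ∩ B) ∪ sphere (A i) (r i) := by
            intro y hy
            by_cases hc : g i y = (r i)⁻¹
            · exact Or.inr (hsphere hc)
            · exact Or.inl ⟨hc, hy⟩
          exact le_trans (measure_mono hsub) (measure_union_le _ _)
        rw [hnull, Measure.addHaar_sphere, add_zero] at hcover
        have hposB : 0 < volume B := measure_closedBall_pos volume x hs
        exact absurd (le_antisymm hcover zero_le) (by
          simpa using hposB.ne')
      · rw [havg i] at hlt
        calc ((r i)⁻¹) ^ p < ⨍ y, (fun t : ℝ => t ^ p) (g i y) ∂(volume.restrict B) := hlt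
        _ = m⁻¹ * ∫ y in B, (g i y) ^ p := by
          rw [average_eq, Measure.real, Measure.restrict_apply_univ, hvol, smul_eq_mul]
    have hsum : V x < m⁻¹ * ∫ y in B, V y := by
      rw [hVxeq, hIntV, Finset.mul_sum]
      apply Finset.sum_lt_sum_of_nonempty hne
      intro i _
      have hz : 0 < ζ i ^ p := Real.rpow_pos_of_pos (hζ i) p
      calc ζ i ^ p * ((r i)⁻¹) ^ p < ζ i ^ p * (m⁻¹ * ∫ y in B, (g i y) ^ p) :=
            (mul_lt_mul_iff_right₀ hz).mpr (hjensen i)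
      _ = m⁻¹ * (ζ i ^ p * ∫ y in B, (g i y) ^ p) := by ring
    have : m⁻¹ * ∫ y in B, V y ≤ m⁻¹ * (m * V x) :=
      mul_le_mul_of_nonneg_left hintVle (by positivity)
    rw [← mul_assoc, inv_mul_cancel₀ hmpos.ne', one_mul] at this
    linarith
end
end

section
/- Let p > 0 be an even integer, let A_1, …, A_n be distinct points in ℝ³ carrying unit charges, and let V_p(x) = Σ_{i=1}^n 1/‖x − A_i‖^p. Then for every straight line L ⊂ ℝ³ that avoids the points A_1, …, A_n, the restriction of V_p to L has at most p(n−1) + 2n − 1 critical points; that is, for any parametrization γ(t) = a + t·v of L with v ≠ 0, the real function t ↦ V_p(γ(t)) has at most p(n−1) + 2n − 1 points where its derivative vanishes. -/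
noncomputable section

open Finset

/-- The modified electrostatic potential of unit point charges at the points `A i`,
with natural exponent `p`. -/
def VpLine {n : ℕ} (A : Fin n → E3) (p : ℕ) : E3 → ℝ :=
  fun x => ∑ i, 1 / ‖x - A i‖ ^ p

open Polynomial in
/-- for even `p > 0`, the restriction of `V_p` to any straight line
avoiding the charges has at most `p(n-1) + 2n - 1` critical points. -/
theorem stmt18 (n : ℕ) (hn : 0 < n) (p : ℕ) (hp : 0 < p) (hpe : Even p)
    (A : Fin n → E3) (hA : Function.Injective A)
    (a v : E3) (hv : v ≠ 0) (hline : ∀ (t : ℝ) (i : Fin n), a + t • v ≠ A i) :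
    {t : ℝ | deriv (fun s : ℝ => VpLine A p (a + s • v)) t = 0}.Finite ∧
    {t : ℝ | deriv (fun s : ℝ => VpLine A p (a + s • v)) t = 0}.ncard ≤
      p * (n - 1) + 2 * n - 1 := by
  obtain ⟨m, hm⟩ := hpe
  have hm1 : 1 ≤ m := by omega
  set w : Fin n → E3 := fun i => a - A i with hw
  have hv2 : (0:ℝ) < ‖v‖^2 := by
    have := norm_pos_iff.mpr hv
    positivity
  -- the quadratic polynomials `q i`, with `q i (t) = ‖a + t • v - A i‖ ^ 2`
  set q : Fin n → ℝ[X] := fun i =>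
    C (‖v‖^2) * X^2 + C (2 * (inner ℝ v (w i) : ℝ)) * X + C (‖w i‖^2) with hqdef
  set r : Fin n → ℝ[X] := fun i =>
    C (2 * ‖v‖^2) * X + C (2 * (inner ℝ v (w i) : ℝ)) with hrdef
  have hqeval : ∀ (i : Fin n) (t : ℝ), (q i).eval t = ‖a + t • v - A i‖^2 := by
    intro i t
    have h1 : a + t • v - A i = w i + t • v := by rw [hw]; exact add_sub_right_comm _ _ _
    rw [h1, norm_add_sq_real]
    have h2 : (inner ℝ (w i) (t • v) : ℝ) = t * (inner ℝ v (w i) : ℝ) := by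
      rw [real_inner_smul_right, real_inner_comm]
    have h3 : ‖t • v‖^2 = t^2 * ‖v‖^2 := by
      rw [norm_smul]; simp [mul_pow, sq_abs]
    rw [h2, h3, hqdef]
    simp only [eval_add, eval_mul, eval_C, eval_pow, eval_X]
    ring
  have hqpos : ∀ (t : ℝ) (i : Fin n), 0 < (q i).eval t := by
    intro t i
    rw [hqeval]
    have : a + t • v - A i ≠ 0 := sub_ne_zero.mpr (hline t i)
    have := norm_pos_iff.mpr this
    positivity
  have hqderiv : ∀ i, derivative (q i) = r i := by
    intro i
    rw [hqdef, hrdef]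
    simp only [derivative_add, derivative_mul, derivative_C, derivative_X_pow,
      derivative_X, zero_mul, mul_one, zero_add, add_zero]
    ring_nf
    simp [C_mul]
    ring
  -- rewrite the function
  have hfeq : (fun s : ℝ => VpLine A p (a + s • v))
      = fun s => ∑ i, (((q i).eval s) ^ m)⁻¹ := by
    funext s
    unfold VpLine
    refine Finset.sum_congr rfl fun i _ => ?_
    rw [one_div, hqeval, ← pow_mul, hm, two_mul]
  -- the derivative
  set D : ℝ → ℝ := fun t =>
    ∑ i, -((m : ℝ) * ((q i).eval t) ^ (m - 1) * (r i).eval t) / (((q i).eval t ^ m) ^ 2)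
    with hD
  have hderiv : ∀ t : ℝ, HasDerivAt (fun s : ℝ => VpLine A p (a + s • v)) (D t) t := by
    intro t
    rw [hfeq, hD]
    refine HasDerivAt.fun_sum fun i _ => ?_
    have h1 : HasDerivAt (fun s : ℝ => (q i).eval s) ((r i).eval t) t := by
      have := (q i).hasDerivAt t
      rwa [hqderiv] at this
    exact (h1.pow m).inv (pow_ne_zero _ (ne_of_gt (hqpos t i)))
  -- the key polynomial
  set P : ℝ[X] := ∑ i, r i * ∏ j ∈ univ.erase i, (q j) ^ (m + 1) with hP
  have hPeval : ∀ t : ℝ, P.eval t =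
      ∑ i, (r i).eval t * ∏ j ∈ univ.erase i, ((q j).eval t) ^ (m + 1) := by
    intro t
    rw [hP]
    simp [eval_finset_sum, eval_prod]
  -- key identity : D t * (∏ q j (t))^(m+1) = -(m) * P.eval t
  have hkey : ∀ t : ℝ, D t * (∏ j, (q j).eval t) ^ (m + 1) = -(m : ℝ) * P.eval t := by
    intro t
    rw [hD, hPeval, Finset.sum_mul, Finset.mul_sum]
    refine Finset.sum_congr rfl fun i _ => ?_
    set c : Fin n → ℝ := fun j => (q j).eval t with hc
    have hprod : (∏ j, c j) ^ (m + 1)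
        = c i ^ (m + 1) * ∏ j ∈ univ.erase i, (c j) ^ (m + 1) := by
      rw [← Finset.prod_pow]
      rw [← Finset.mul_prod_erase univ (fun j => c j ^ (m+1)) (mem_univ i)]
    have hci : 0 < c i := hqpos t i
    have hsq : (c i ^ m) ^ 2 = c i ^ (m - 1) * c i ^ (m + 1) := by
      rw [← pow_mul, ← pow_add]
      congr 1
      omega
    rw [hprod, hsq]
    have h1 : c i ^ (m - 1) ≠ 0 := by positivity
    have h2 : c i ^ (m + 1) ≠ 0 := by positivity
    field_simp
    ring
  have hDiff : ∀ t : ℝ, (D t = 0 ↔ P.eval t = 0) := by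
    intro t
    have hK : (0:ℝ) < (∏ j, (q j).eval t) ^ (m + 1) := by
      refine pow_pos (Finset.prod_pos fun j _ => hqpos t j) _
    constructor
    · intro h
      have := hkey t
      rw [h, zero_mul] at this
      have hm0 : (m : ℝ) ≠ 0 := by positivity
      have := this.symm
      rcases mul_eq_zero.mp this with h' | h'
      · exact absurd h' (by simpa using hm0)
      · exact h'
    · intro h
      have := hkey t
      rw [h, mul_zero] at this
      exact (mul_eq_zero.mp this).resolve_right (ne_of_gt hK)
  -- P is nonzero, with natDegree ≤ 1 + 2 * ((n-1)*(m+1))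
  have hq0 : ∀ j, q j ≠ 0 := by
    intro j h
    have := hqpos 0 j
    rw [h] at this
    simp at this
  have hr0 : ∀ j, r j ≠ 0 := by
    intro j h
    have : (r j).natDegree = 1 := natDegree_linear (by positivity)
    rw [h] at this
    simp at this
  have hqdeg : ∀ j, (q j).natDegree = 2 := fun j => natDegree_quadratic (ne_of_gt hv2)
  have hqlc : ∀ j, (q j).leadingCoeff = ‖v‖^2 := fun j => leadingCoeff_quadratic (ne_of_gt hv2)
  have hrdeg : ∀ j, (r j).natDegree = 1 := fun j => natDegree_linear (by positivity)
  have hrlc : ∀ j, (r j).leadingCoeff = 2 * ‖v‖^2 := fun j => leadingCoeff_linear (by positivity)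
  set Dg : ℕ := 1 + 2 * ((n - 1) * (m + 1)) with hDg
  have hprodne : ∀ i : Fin n, (∏ j ∈ univ.erase i, (q j) ^ (m + 1)) ≠ 0 := by
    intro i
    exact Finset.prod_ne_zero_iff.mpr fun j _ => pow_ne_zero _ (hq0 j)
  have hTdeg : ∀ i : Fin n, (r i * ∏ j ∈ univ.erase i, (q j) ^ (m + 1)).natDegree = Dg := by
    intro i
    rw [natDegree_mul (hr0 i) (hprodne i), natDegree_prod _ _ (fun j _ => pow_ne_zero _ (hq0 j))]
    have : ∀ j ∈ univ.erase i, ((q j) ^ (m+1)).natDegree = 2 * (m + 1) := by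
      intro j _
      rw [natDegree_pow, hqdeg]
      ring
    rw [Finset.sum_congr rfl this, Finset.sum_const]
    have hce : (univ.erase i).card = n - 1 := by
      rw [Finset.card_erase_of_mem (mem_univ i), card_univ, Fintype.card_fin]
    rw [hce, hrdeg, hDg, smul_eq_mul]
    ring
  have hTlc : ∀ i : Fin n, 0 < (r i * ∏ j ∈ univ.erase i, (q j) ^ (m + 1)).leadingCoeff := by
    intro i
    rw [leadingCoeff_mul, leadingCoeff_prod, hrlc]
    have : ∀ j ∈ univ.erase i, ((q j) ^ (m+1)).leadingCoeff = (‖v‖^2) ^ (m+1) := by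
      intro j _
      rw [leadingCoeff_pow, hqlc]
    rw [Finset.prod_congr rfl this, Finset.prod_const]
    positivity
  have hPcoeff : 0 < P.coeff Dg := by
    rw [hP, finset_sum_coeff]
    refine Finset.sum_pos (fun i _ => ?_) (univ_nonempty_iff.mpr ⟨⟨0, hn⟩⟩)
    have := hTdeg i
    rw [← this, coeff_natDegree]
    exact hTlc i
  have hP0 : P ≠ 0 := by
    intro h
    rw [h] at hPcoeff
    simp at hPcoeff
  have hPdeg : P.natDegree ≤ Dg := by
    rw [hP]
    exact natDegree_sum_le_of_forall_le _ _ fun i _ => le_of_eq (hTdeg i)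
  -- conclude
  have hsub : {t : ℝ | deriv (fun s : ℝ => VpLine A p (a + s • v)) t = 0}
      ⊆ (P.roots.toFinset : Set ℝ) := by
    intro t ht
    simp only [Set.mem_setOf_eq] at ht
    rw [(hderiv t).deriv] at ht
    have : P.eval t = 0 := (hDiff t).mp ht
    simp only [Finset.coe_sort_coe, Multiset.mem_toFinset, Finset.mem_coe]
    rw [mem_roots hP0]
    exact this
  have hfin : {t : ℝ | deriv (fun s : ℝ => VpLine A p (a + s • v)) t = 0}.Finite :=
    Set.Finite.subset (P.roots.toFinset.finite_toSet) hsub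
  refine ⟨hfin, ?_⟩
  have h1 := Set.ncard_le_ncard hsub (P.roots.toFinset.finite_toSet)
  rw [Set.ncard_coe_finset] at h1
  have h2 : P.roots.toFinset.card ≤ Multiset.card P.roots := Multiset.toFinset_card_le _
  have h3 := P.card_roots'
  have h4 : Dg ≤ p * (n - 1) + 2 * n - 1 := by
    obtain ⟨k, rfl⟩ : ∃ k, n = k + 1 := ⟨n - 1, by omega⟩
    rw [hDg, hm]
    have e1 : k + 1 - 1 = k := rfl
    rw [e1]
    have e3 : (m + m) * k + 2 * (k + 1) - 1 = (m + m) * k + 2 * k + 1 := by omega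
    rw [e3]
    exact le_of_eq (by ring)
  omega
end
end
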